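/- arXiv:2402.18706 — 7 statements merged into one kernel-verified Lean document; each statement's English description precedes it below -/
import Mathlib

section
/- Under the running assumptions (Green upper bound via the Li–Yau integral, volume lower bound Vol(B_t(x₀)) ≥ α t^n/R^n for t ≤ R with R ≥ R₀, and the uniformity plus integrability conditions on f), for every x, x₀ with d(x,x₀) ≤ R and R ≥ R₀ one has G(x,x₀) ≤ (c₂/α)[R^n/(n−2) + γβ f(R) R^{n−1}] · d(x,x₀)^{−(n−2)}. -/
open MeasureTheory Set

/-- Under the Green upper bound via the Li–Yau integral, the volume lower
bound `Vol(B_t(x₀)) ≥ α t^n/R^n` for `0 < t ≤ R`, `R ≥ R₀`, and the uniformity plus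
integrability conditions on `f`, for every `x ≠ x₀` with `d(x,x₀) ≤ R`, `R ≥ R₀`:
`G(x,x₀) ≤ (c₂/α)[R^n/(n−2) + γβ f(R) R^{n−1}] · d(x,x₀)^{−(n−2)}`. -/
theorem stmt_5 {M : Type*} [MetricSpace M] (V : M → ℝ → ℝ) (G : M → M → ℝ)
    (f : ℝ → ℝ) (n : ℕ) (hn : 3 ≤ n) (c₂ γ β α R₀ : ℝ)
    (hc₂ : 0 < c₂) (hγ : 0 < γ) (hα : 0 < α) (hR₀ : 1 ≤ R₀)
    (hV_pos : ∀ x t, 0 < t → 0 < V x t)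
    (hVlow : ∀ (x₀ : M) (t R : ℝ), R₀ ≤ R → 0 < t → t ≤ R → α * t ^ n / R ^ n ≤ V x₀ t)
    (hf_pos : ∀ t, R₀ ≤ t → 0 < f t)
    (hf_mono : MonotoneOn f (Set.Ici R₀))
    (hf_int : MeasureTheory.IntegrableOn (fun t => 1 / f t) (Set.Ioi R₀))
    (hβ : β = ∫ t in Set.Ioi R₀, 1 / f t)
    (huniform : ∀ (x : M) (r R : ℝ), R₀ ≤ r → r ≤ R →
      R * f R / V x R ≤ γ * (r * f r / V x r))
    (hGreen : ∀ x x₀ : M, x ≠ x₀ →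
      G x x₀ ≤ c₂ * ∫ t in Set.Ioi (dist x x₀), t / V x₀ t) :
    ∀ (x x₀ : M) (R : ℝ), x ≠ x₀ → R₀ ≤ R → dist x x₀ ≤ R →
      G x x₀ ≤ c₂ / α * (R ^ n / ((n : ℝ) - 2) + γ * β * f R * R ^ (n - 1)) /
        (dist x x₀) ^ (n - 2) := by
  intro x x₀ R hx hRR₀ hdR
  obtain ⟨k, rfl⟩ : ∃ k, n = k + 3 := ⟨n - 3, by omega⟩
  set d := dist x x₀ with hd_def
  have hd : 0 < d := dist_pos.mpr hx
  have hR0pos : (0:ℝ) < R₀ := lt_of_lt_of_le one_pos hR₀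
  have hR : 0 < R := lt_of_lt_of_le hR0pos hRR₀
  have hVR : α ≤ V x₀ R := by
    have h := hVlow x₀ R R hRR₀ hR le_rfl
    rwa [mul_div_assoc, div_self (pow_ne_zero _ hR.ne'), mul_one] at h
  have hfR : 0 < f R := hf_pos R hRR₀
  have hβ0 : 0 ≤ β := by
    rw [hβ]
    exact setIntegral_nonneg measurableSet_Ioi fun t ht =>
      le_of_lt (by have := hf_pos t ht.le; positivity)
  set C1 : ℝ := R ^ (k+3) / α with hC1_def
  set C2 : ℝ := γ * R * f R / α with hC2_def
  have hC1 : 0 < C1 := by positivity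
  have hC2 : 0 < C2 := by positivity
  set g : ℝ → ℝ := fun t => if t ≤ R then C1 / t ^ (k+2) else C2 * (1 / f t) with hg_def
  have hi1 : IntegrableOn (fun t => C1 / t ^ (k+2)) (Ioc d R) := by
    apply (ContinuousOn.integrableOn_Icc ?_).mono_set Ioc_subset_Icc_self
    exact continuousOn_const.div (continuousOn_pow _)
      (fun t ht => pow_ne_zero _ (ne_of_gt (lt_of_lt_of_le hd ht.1)))
  have hi2 : IntegrableOn (fun t => C2 * (1 / f t)) (Ioi R) :=
    (hf_int.mono_set (Ioi_subset_Ioi hRR₀)).const_mul C2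
  have hg1 : EqOn (fun t => C1 / t ^ (k+2)) g (Ioc d R) := fun t ht => (if_pos ht.2).symm
  have hg2 : EqOn (fun t => C2 * (1 / f t)) g (Ioi R) := fun t ht => (if_neg (not_le.mpr ht)).symm
  have hgi1 : IntegrableOn g (Ioc d R) := hi1.congr_fun hg1 measurableSet_Ioc
  have hgi2 : IntegrableOn g (Ioi R) := hi2.congr_fun hg2 measurableSet_Ioi
  have hunion : Ioc d R ∪ Ioi R = Ioi d := Ioc_union_Ioi_eq_Ioi hdR
  have hgi : IntegrableOn g (Ioi d) := by rw [← hunion]; exact hgi1.union hgi2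
  -- pointwise bound h ≤ g on Ioi d
  have hle : ∀ t ∈ Ioi d, t / V x₀ t ≤ g t := by
    intro t ht
    have ht0 : 0 < t := lt_trans hd ht
    have hVt : 0 < V x₀ t := hV_pos x₀ t ht0
    by_cases htR : t ≤ R
    · have hlow : α * t ^ (k+3) / R ^ (k+3) ≤ V x₀ t := hVlow x₀ t R hRR₀ ht0 htR
      have hlow0 : 0 < α * t ^ (k+3) / R ^ (k+3) := by positivity
      have h1 : t / V x₀ t ≤ t / (α * t ^ (k+3) / R ^ (k+3)) :=
        div_le_div_of_nonneg_left ht0.le hlow0 hlow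
      have h2 : t / (α * t ^ (k+3) / R ^ (k+3)) = C1 / t ^ (k+2) := by
        rw [hC1_def]
        field_simp
        ring
      rw [hg_def]
      simp only [if_pos htR]
      rw [← h2]; exact h1
    · push_neg at htR
      have hftpos : 0 < f t := hf_pos t (le_trans hRR₀ htR.le)
      have hu : t * f t / V x₀ t ≤ γ * (R * f R / V x₀ R) := huniform x₀ R t hRR₀ htR.le
      have hu2 : γ * (R * f R / V x₀ R) ≤ γ * (R * f R / α) := by
        apply mul_le_mul_of_nonneg_left _ hγ.le
        apply div_le_div_of_nonneg_left (by positivity) hα hVR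
      have h3 : t / V x₀ t = (t * f t / V x₀ t) / f t := by field_simp
      rw [hg_def]
      simp only [if_neg (not_le.mpr htR)]
      rw [h3]
      calc (t * f t / V x₀ t) / f t ≤ (γ * (R * f R / α)) / f t := by
            rw [div_eq_mul_inv, div_eq_mul_inv]
            exact mul_le_mul_of_nonneg_right (le_trans hu hu2) (by positivity)
          _ = C2 * (1 / f t) := by rw [hC2_def]; ring
  have hnn : ∀ t ∈ Ioi d, 0 ≤ t / V x₀ t := by
    intro t ht
    have ht0 : 0 < t := lt_trans hd ht
    have := hV_pos x₀ t ht0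
    positivity
  have hmono : (∫ t in Ioi d, t / V x₀ t) ≤ ∫ t in Ioi d, g t := by
    apply integral_mono_of_nonneg
    · exact (ae_restrict_iff' measurableSet_Ioi).mpr (Filter.Eventually.of_forall hnn)
    · exact hgi
    · exact (ae_restrict_iff' measurableSet_Ioi).mpr (Filter.Eventually.of_forall hle)
  -- split integral
  have hsplit : (∫ t in Ioi d, g t)
      = (∫ t in Ioc d R, g t) + ∫ t in Ioi R, g t := by
    rw [← hunion]
    exact setIntegral_union (Ioc_disjoint_Ioi le_rfl) measurableSet_Ioi hgi1 hgi2
  -- first piece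
  have hA : (∫ t in Ioc d R, g t) ≤ C1 * ((d ^ (k+1))⁻¹ / ((k:ℝ)+1)) := by
    rw [setIntegral_congr_fun measurableSet_Ioc hg1.symm]
    have hzp : EqOn (fun t => C1 / t ^ (k+2))
        (fun t : ℝ => C1 * t ^ (-((k+2:ℕ) : ℤ))) (Ioc d R) := by
      intro t ht
      simp only [zpow_neg, zpow_natCast, div_eq_mul_inv]
    rw [setIntegral_congr_fun measurableSet_Ioc hzp]
    rw [← intervalIntegral.integral_of_le hdR, intervalIntegral.integral_const_mul,
      integral_zpow (Or.inr ⟨by omega, notMem_uIcc_of_lt hd hR⟩)]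
    apply mul_le_mul_of_nonneg_left _ hC1.le
    have he : (-((k+2:ℕ) : ℤ)) + 1 = -((k+1:ℕ) : ℤ) := by push_cast; ring
    have h1 : (R:ℝ) ^ ((-((k+2:ℕ) : ℤ)) + 1) = (R ^ (k+1))⁻¹ := by
      rw [he, zpow_neg, zpow_natCast]
    have h2 : (d:ℝ) ^ ((-((k+2:ℕ) : ℤ)) + 1) = (d ^ (k+1))⁻¹ := by
      rw [he, zpow_neg, zpow_natCast]
    rw [h1, h2]
    push_cast
    rw [show (-((k:ℝ)+2)+1) = -((k:ℝ)+1) by ring, div_neg, ← neg_div, neg_sub]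
    have hnum : (d ^ (k+1))⁻¹ - (R ^ (k+1))⁻¹ ≤ (d ^ (k+1))⁻¹ :=
      sub_le_self _ (by positivity)
    rw [div_eq_mul_inv, div_eq_mul_inv]
    exact mul_le_mul_of_nonneg_right hnum (by positivity)
  -- second piece
  have hB : (∫ t in Ioi R, g t) ≤ C2 * β := by
    rw [setIntegral_congr_fun measurableSet_Ioi hg2.symm]
    rw [integral_const_mul]
    apply mul_le_mul_of_nonneg_left _ hC2.le
    rw [hβ]
    apply setIntegral_mono_set hf_int
    · exact (ae_restrict_iff' measurableSet_Ioi).mpr (Filter.Eventually.of_forall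
        (fun t ht => le_of_lt (by have := hf_pos t ht.le; positivity)))
    · exact HasSubset.Subset.eventuallyLE (Ioi_subset_Ioi hRR₀)
  -- combine
  have hG := hGreen x x₀ hx
  rw [← hd_def] at hG
  have hsum : (∫ t in Ioi d, t / V x₀ t) ≤ C1 * ((d ^ (k+1))⁻¹ / ((k:ℝ)+1)) + C2 * β := by
    calc (∫ t in Ioi d, t / V x₀ t) ≤ ∫ t in Ioi d, g t := hmono
      _ = (∫ t in Ioc d R, g t) + ∫ t in Ioi R, g t := hsplit
      _ ≤ _ := add_le_add hA hB
  have hfinal : c₂ * (C1 * ((d ^ (k+1))⁻¹ / ((k:ℝ)+1)) + C2 * β)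
      ≤ c₂ / α * (R ^ (k+3) / (((k:ℝ)+3) - 2) + γ * β * f R * R ^ (k+3-1)) / d ^ (k+3-2) := by
    have e1 : (k+3-1) = k+2 := by omega
    have e2 : (k+3-2) = k+1 := by omega
    rw [e1, e2, show (((k:ℝ)+3) - 2) = (k:ℝ)+1 by ring]
    have hdk : (0:ℝ) < d ^ (k+1) := by positivity
    have hterm2 : C2 * β ≤ γ * β * f R * R ^ (k+2) / α / d ^ (k+1) := by
      rw [hC2_def, div_div, div_mul_eq_mul_div, div_le_div_iff₀ hα (by positivity)]
      have hpw : d ^ (k+1) ≤ R ^ (k+1) := pow_le_pow_left₀ hd.le hdR _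
      calc γ * R * f R * β * (α * d ^ (k+1))
          = (γ * β * f R * α) * (R * d ^ (k+1)) := by ring
        _ ≤ (γ * β * f R * α) * (R * R ^ (k+1)) := by
            apply mul_le_mul_of_nonneg_left _ (by positivity)
            exact mul_le_mul_of_nonneg_left hpw hR.le
        _ = γ * β * f R * R ^ (k+2) * α := by ring
    have hterm1 : c₂ * (C1 * ((d ^ (k+1))⁻¹ / ((k:ℝ)+1)))
        = c₂ / α * (R ^ (k+3) / ((k:ℝ)+1)) / d ^ (k+1) := by
      rw [hC1_def]; field_simp
    calc c₂ * (C1 * ((d ^ (k+1))⁻¹ / ((k:ℝ)+1)) + C2 * β)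
        = c₂ * (C1 * ((d ^ (k+1))⁻¹ / ((k:ℝ)+1))) + c₂ * (C2 * β) := by ring
      _ ≤ c₂ / α * (R ^ (k+3) / ((k:ℝ)+1)) / d ^ (k+1)
          + c₂ * (γ * β * f R * R ^ (k+2) / α / d ^ (k+1)) := by
          rw [hterm1]
          exact add_le_add le_rfl (mul_le_mul_of_nonneg_left hterm2 hc₂.le)
      _ = c₂ / α * (R ^ (k+3) / ((k:ℝ)+1) + γ * β * f R * R ^ (k+2)) / d ^ (k+1) := by
          field_simp
  push_cast at hfinal ⊢
  calc G x x₀ ≤ c₂ * ∫ t in Ioi d, t / V x₀ t := hG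
    _ ≤ c₂ * (C1 * ((d ^ (k+1))⁻¹ / ((k:ℝ)+1)) + C2 * β) :=
        mul_le_mul_of_nonneg_left hsum hc₂.le
    _ ≤ _ := hfinal
end

section
/- Under the running assumptions, for every R ≥ R₀ and every x₀, ∫_{B_R(x₀)} G(x,x₀) dμ(x) ≤ c₂ max{γ, 1/2} · ( R f(R) ∫_R^∞ dt/f(t) + R² ). The proof uses the coarea formula, integration by parts, and the Green upper bound. -/
open MeasureTheory Set
open scoped ENNReal

/-- Under the Green upper bound via the Li–Yau integral, the uniformity and
integrability conditions on `f`, and the coarea identity (assumed as a hypothesis, with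
surface measure `s x₀ r = (d/dr)Vol(B_r(x₀))`), for every `R ≥ R₀` and every `x₀`:
`∫_{B_R(x₀)} G(x,x₀) dμ(x) ≤ c₂ max{γ,1/2} (R f(R) ∫_R^∞ dt/f(t) + R²)`. -/
theorem stmt_6 {M : Type*} [MetricSpace M] [MeasurableSpace M] [BorelSpace M]
    (μ : MeasureTheory.Measure M) (V s : M → ℝ → ℝ) (G : M → M → ℝ)
    (f : ℝ → ℝ) (c₂ γ R₀ : ℝ) (hc₂ : 0 < c₂) (hγ : 0 < γ) (hR₀ : 1 ≤ R₀)
    (hV : ∀ (x₀ : M) (r : ℝ), 0 < r → V x₀ r = (μ (Metric.ball x₀ r)).toReal)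
    (hV_pos : ∀ x t, 0 < t → 0 < V x t)
    (hs : ∀ (x₀ : M) (r : ℝ), 0 < r → HasDerivAt (V x₀) (s x₀ r) r)
    (hcoarea : ∀ (x₀ : M) (R : ℝ) (φ : ℝ → ℝ), 0 < R →
      (∫ x in Metric.ball x₀ R, φ (dist x x₀) ∂μ) = ∫ r in Set.Ioc 0 R, s x₀ r * φ r)
    (hf_pos : ∀ t, R₀ ≤ t → 0 < f t)
    (hf_mono : MonotoneOn f (Set.Ici R₀))
    (hf_int : MeasureTheory.IntegrableOn (fun t => 1 / f t) (Set.Ioi R₀))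
    (huniform : ∀ (x : M) (r R : ℝ), R₀ ≤ r → r ≤ R →
      R * f R / V x R ≤ γ * (r * f r / V x r))
    (hGreen : ∀ x x₀ : M, x ≠ x₀ →
      G x x₀ ≤ c₂ * ∫ t in Set.Ioi (dist x x₀), t / V x₀ t) :
    ∀ (x₀ : M) (R : ℝ), R₀ ≤ R →
      (∫ x in Metric.ball x₀ R, G x x₀ ∂μ) ≤
        c₂ * max γ (1 / 2) * (R * f R * (∫ t in Set.Ioi R, 1 / f t) + R ^ 2) := by
  intro x₀ R hRR₀
  have hR₀pos : (0:ℝ) < R₀ := lt_of_lt_of_le one_pos hR₀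
  have hRpos : (0:ℝ) < R := lt_of_lt_of_le hR₀pos hRR₀
  -- ball measures are finite
  have hball_fin : ∀ ρ : ℝ, 0 < ρ → μ (Metric.ball x₀ ρ) < ⊤ := by
    intro ρ hρ
    by_contra hcon
    have h1 := hV_pos x₀ ρ hρ
    rw [hV x₀ ρ hρ] at h1
    rw [not_lt, top_le_iff] at hcon
    rw [hcon] at h1
    simp at h1
  have hWpos : ∀ t : ℝ, 0 < t → 0 < V x₀ t := fun t ht => hV_pos x₀ t ht
  have hWmono : ∀ a b : ℝ, 0 < a → a ≤ b → V x₀ a ≤ V x₀ b := by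
    intro a b ha hab
    have hb : 0 < b := lt_of_lt_of_le ha hab
    rw [hV x₀ a ha, hV x₀ b hb]
    exact ENNReal.toReal_mono (hball_fin b hb).ne (measure_mono (Metric.ball_subset_ball hab))
  -- the density s x₀ is nonnegative on (0,∞)
  have hsf_nonneg : ∀ r : ℝ, 0 < r → 0 ≤ s x₀ r := by
    intro r hr
    have hd := ((hs x₀ r hr).hasDerivWithinAt (s := Ioi r))
    rw [hasDerivWithinAt_iff_tendsto_slope] at hd
    have hself : Ioi r \ {r} = Ioi r := diff_singleton_eq_self (by simp)
    rw [hself] at hd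
    refine ge_of_tendsto hd ?_
    filter_upwards [self_mem_nhdsWithin] with t ht
    have htr : r < t := ht
    rw [slope_def_field]
    exact div_nonneg (sub_nonneg.2 (hWmono r t hr htr.le)) (sub_nonneg.2 htr.le)
  -- FTC for the coarea density, from the coarea identity with φ = 1
  have hs_FTC : ∀ ρ : ℝ, 0 < ρ → IntegrableOn (s x₀) (Ioc 0 ρ) volume ∧
      (∫ r in Ioc 0 ρ, s x₀ r) = V x₀ ρ := by
    intro ρ hρ
    have hc := hcoarea x₀ ρ (fun _ => (1:ℝ)) hρ
    have hl : (∫ _x in Metric.ball x₀ ρ, (1:ℝ) ∂μ) = V x₀ ρ := by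
      rw [setIntegral_const, smul_eq_mul, mul_one, hV x₀ ρ hρ]; rfl
    simp only [mul_one] at hc
    rw [hl] at hc
    have hint : IntegrableOn (s x₀) (Ioc 0 ρ) volume := by
      by_contra hni
      rw [integral_undef hni] at hc
      exact (hWpos ρ hρ).ne' hc
    exact ⟨hint, hc.symm⟩
  -- measurable stand-ins
  set Wm : ℝ → ℝ := fun t => (μ (Metric.ball x₀ t)).toReal with hWmdef
  have hWmW : ∀ t : ℝ, 0 < t → Wm t = V x₀ t := fun t ht => (hV x₀ t ht).symm
  have hWm_mono : Monotone Wm := by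
    intro a b hab
    rcases le_or_gt b 0 with hb | hb
    · simp only [hWmdef]
      rw [Metric.ball_eq_empty.2 hb, Metric.ball_eq_empty.2 (le_trans hab hb)]
    · exact ENNReal.toReal_mono (hball_fin b hb).ne (measure_mono (Metric.ball_subset_ball hab))
  have hWm_meas : Measurable Wm := hWm_mono.measurable
  set sm : ℝ → ℝ := deriv Wm with hsmdef
  have hsm_meas : Measurable sm := measurable_deriv Wm
  have hsm_eq : ∀ r : ℝ, 0 < r → sm r = s x₀ r := by
    intro r hr
    have hW : HasDerivAt Wm (s x₀ r) r := by
      apply (hs x₀ r hr).congr_of_eventuallyEq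
      filter_upwards [Ioi_mem_nhds hr] with t ht
      exact hWmW t ht
    exact hW.deriv
  set Q : ℝ → ℝ≥0∞ := fun t => ENNReal.ofReal (t / Wm t) with hQdef
  have hQ_meas : Measurable Q := ENNReal.measurable_ofReal.comp (measurable_id.div hWm_meas)
  set H : ℝ → ℝ≥0∞ := fun r => ∫⁻ t in Ioi r, Q t with hHdef
  have hH_anti : Antitone H := fun a b hab => lintegral_mono_set (Ioi_subset_Ioi hab)
  have hH_meas : Measurable H := hH_anti.measurable
  -- continuity and integrability of t ↦ t / V x₀ t
  have hW_cont : ContinuousOn (V x₀) (Ioi 0) :=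
    fun t ht => ((hs x₀ t ht).continuousAt).continuousWithinAt
  have htW_cont : ContinuousOn (fun t => t / V x₀ t) (Ioi 0) :=
    continuousOn_id.div hW_cont (fun t ht => (hWpos t ht).ne')
  have htW_int : ∀ r : ℝ, 0 < r → IntegrableOn (fun t => t / V x₀ t) (Ioi r) volume := by
    intro r hr
    have hm : r ≤ max r R₀ := le_max_left _ _
    rw [← Ioc_union_Ioi_eq_Ioi hm]
    apply IntegrableOn.union
    · have hsub : Icc r (max r R₀) ⊆ Ioi 0 := fun t ht => lt_of_lt_of_le hr ht.1
      exact ((htW_cont.mono hsub).integrableOn_Icc).mono_set Ioc_subset_Icc_self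
    · have hsub : Ioi (max r R₀) ⊆ Ioi 0 := fun t ht => lt_trans (lt_of_lt_of_le hR₀pos
        (le_max_right r R₀)) ht
      have hmeas : AEStronglyMeasurable (fun t => t / V x₀ t)
          (volume.restrict (Ioi (max r R₀))) :=
        (htW_cont.mono hsub).aestronglyMeasurable measurableSet_Ioi
      apply Integrable.mono'
        ((hf_int.mono_set (Ioi_subset_Ioi (le_max_right r R₀))).const_mul
          (γ * (R₀ * f R₀ / V x₀ R₀))) hmeas
      filter_upwards [ae_restrict_mem measurableSet_Ioi] with t ht
      have htR₀ : R₀ < t := lt_of_le_of_lt (le_max_right r R₀) ht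
      have ht0 : 0 < t := lt_trans hR₀pos htR₀
      have hft : 0 < f t := hf_pos t htR₀.le
      have hWt : 0 < V x₀ t := hWpos t ht0
      have hu := huniform x₀ R₀ t le_rfl htR₀.le
      rw [Real.norm_eq_abs, abs_of_nonneg (div_nonneg ht0.le hWt.le), mul_one_div,
        le_div_iff₀ hft]
      have he : t / V x₀ t * f t = t * f t / V x₀ t := by ring
      rw [he]
      calc t * f t / V x₀ t ≤ γ * (R₀ * f R₀ / V x₀ R₀) := hu
        _ = γ * (R₀ * f R₀ / V x₀ R₀) := rfl
  have hh_nonneg : ∀ r : ℝ, 0 ≤ r → 0 ≤ ∫ t in Ioi r, t / V x₀ t := by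
    intro r hr
    apply setIntegral_nonneg measurableSet_Ioi
    intro t ht
    have ht0 : 0 < t := lt_of_le_of_lt hr ht
    exact div_nonneg ht0.le (hWpos t ht0).le
  have hHofReal : ∀ r : ℝ, 0 < r → H r = ENNReal.ofReal (∫ t in Ioi r, t / V x₀ t) := by
    intro r hr
    have h1 : (∫⁻ t in Ioi r, Q t) = ∫⁻ t in Ioi r, ENNReal.ofReal (t / V x₀ t) := by
      apply setLIntegral_congr_fun measurableSet_Ioi
      intro t ht
      simp only [hQdef]
      rw [hWmW t (lt_trans hr ht)]
    have hnn : 0 ≤ᵐ[volume.restrict (Ioi r)] fun t => t / V x₀ t := by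
      refine (ae_restrict_iff' measurableSet_Ioi).2 (ae_of_all _ fun t ht => ?_)
      have ht0 : 0 < t := lt_trans hr ht
      exact div_nonneg ht0.le (hWpos t ht0).le
    rw [hHdef]
    simp only
    rw [h1, ← ofReal_integral_eq_lintegral_ofReal (htW_int r hr) hnn]
  have hH_fin : ∀ r : ℝ, 0 < r → H r ≠ ⊤ := fun r hr => by
    rw [hHofReal r hr]; exact ENNReal.ofReal_ne_top
  -- the function appearing in the coarea formula
  set φs : ℝ → ℝ := fun r => (H r).toReal with hφsdef
  have hφs_meas : Measurable φs := hH_meas.ennreal_toReal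
  set gm : M → ℝ := fun x => φs (dist x x₀) with hgmdef
  have hdist_meas : Measurable fun x : M => dist x x₀ :=
    (continuous_id.dist continuous_const).measurable
  have hgm_meas : Measurable gm := hφs_meas.comp hdist_meas
  have hgm_nonneg : ∀ x, 0 ≤ gm x := fun x => ENNReal.toReal_nonneg
  have hgm_eq : ∀ x : M, x ≠ x₀ → gm x = ∫ t in Ioi (dist x x₀), t / V x₀ t := by
    intro x hx
    have hd : 0 < dist x x₀ := dist_pos.2 hx
    simp only [hgmdef, hφsdef]
    rw [hHofReal _ hd, ENNReal.toReal_ofReal (hh_nonneg _ hd.le)]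
  have hx₀_ball : x₀ ∈ Metric.ball x₀ R := Metric.mem_ball_self hRpos
  have hball_meas : MeasurableSet (Metric.ball x₀ R) := Metric.isOpen_ball.measurableSet
  -- the center is a null point
  have hμx₀ : μ {x₀} = 0 := by
    have hc := hcoarea x₀ R (fun r => if r = 0 then (1:ℝ) else 0) hRpos
    have hl : (∫ x in Metric.ball x₀ R, (if dist x x₀ = 0 then (1:ℝ) else 0) ∂μ)
        = (μ {x₀}).toReal := by
      have he : (fun x : M => if dist x x₀ = 0 then (1:ℝ) else 0)
          = Set.indicator {x₀} (fun _ => (1:ℝ)) := by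
        funext x
        by_cases hx : x = x₀ <;> simp [hx, Set.indicator, dist_eq_zero]
      rw [he, setIntegral_indicator (measurableSet_singleton x₀),
        Set.inter_eq_right.2 (singleton_subset_iff.2 hx₀_ball), setIntegral_const,
        smul_eq_mul, mul_one]; rfl
    have hr : (∫ r in Ioc 0 R, s x₀ r * (if r = 0 then (1:ℝ) else 0)) = 0 := by
      have he : EqOn (fun r => s x₀ r * (if r = 0 then (1:ℝ) else 0)) (fun _ => (0:ℝ))
          (Ioc 0 R) := by
        intro r hr
        simp [hr.1.ne']
      rw [setIntegral_congr_fun measurableSet_Ioc he, integral_zero]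
    rw [hl, hr] at hc
    have hle : μ {x₀} ≤ μ (Metric.ball x₀ R) :=
      measure_mono (singleton_subset_iff.2 hx₀_ball)
    rcases (ENNReal.toReal_eq_zero_iff _).1 hc with h | h
    · exact h
    · exact absurd (lt_of_le_of_lt hle (hball_fin R hRpos)) (by rw [h]; simp)
  have hne_ball : ∀ᵐ x ∂(μ.restrict (Metric.ball x₀ R)), x ≠ x₀ := by
    rw [ae_iff]
    have he : {x : M | ¬ x ≠ x₀} = {x₀} := by ext x; simp
    rw [he, Measure.restrict_apply (measurableSet_singleton x₀)]
    exact measure_mono_null inter_subset_left hμx₀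
  -- coarea identity for φs
  have hcoareaB := hcoarea x₀ R φs hRpos
  set B : ℝ := ∫ r in Ioc 0 R, s x₀ r * φs r with hBdef
  have hB_nonneg : 0 ≤ B :=
    setIntegral_nonneg measurableSet_Ioc
      (fun r hr => mul_nonneg (hsf_nonneg r hr.1) ENNReal.toReal_nonneg)
  -- relate B with a lintegral
  set LB : ℝ≥0∞ := ∫⁻ r in Ioc 0 R, ENNReal.ofReal (sm r) * H r with hLBdef
  have hmem_Ioc : ∀ᵐ r ∂(volume.restrict (Ioc (0:ℝ) R)), r ∈ Ioc (0:ℝ) R :=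
    ae_restrict_mem measurableSet_Ioc
  have hB_meas_ae : AEStronglyMeasurable (fun r => s x₀ r * φs r)
      (volume.restrict (Ioc (0:ℝ) R)) := by
    apply ((hsm_meas.mul hφs_meas).aestronglyMeasurable).congr
    filter_upwards [hmem_Ioc] with r hr
    rw [Pi.mul_apply, hsm_eq r hr.1]
  have hB_nn_ae : 0 ≤ᵐ[volume.restrict (Ioc (0:ℝ) R)] fun r => s x₀ r * φs r := by
    filter_upwards [hmem_Ioc] with r hr
    exact mul_nonneg (hsf_nonneg r hr.1) ENNReal.toReal_nonneg
  have hB_lint : (∫⁻ r in Ioc 0 R, ENNReal.ofReal (s x₀ r * φs r)) = LB := by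
    apply setLIntegral_congr_fun measurableSet_Ioc (fun r hr => ?_)
    rw [ENNReal.ofReal_mul (hsf_nonneg r hr.1)]
    simp only [hφsdef]
    rw [ENNReal.ofReal_toReal (hH_fin r hr.1), hsm_eq r hr.1]
  have hB_eq : B = LB.toReal := by
    rw [hBdef, integral_eq_lintegral_of_nonneg_ae hB_nn_ae hB_meas_ae, hB_lint]
  -- Tonelli argument
  set F : ℝ → ℝ → ℝ≥0∞ := fun r t => if r < t then ENNReal.ofReal (sm r) * Q t else 0
    with hFdef
  have hF_meas : Measurable (Function.uncurry F) := by
    apply Measurable.ite (measurableSet_lt measurable_fst measurable_snd)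
    · exact (ENNReal.measurable_ofReal.comp (hsm_meas.comp measurable_fst)).mul
        (hQ_meas.comp measurable_snd)
    · exact measurable_const
  have hstep1 : LB = ∫⁻ r in Ioc (0:ℝ) R, ∫⁻ t in Ioi (0:ℝ), F r t := by
    apply setLIntegral_congr_fun measurableSet_Ioc (fun r hr => ?_)
    have h1 : ∀ t : ℝ, F r t = (Ioi r).indicator (fun t => ENNReal.ofReal (sm r) * Q t) t := by
      intro t
      simp [hFdef, Set.indicator_apply, Set.mem_Ioi]
    calc ENNReal.ofReal (sm r) * H r
        = ∫⁻ t in Ioi r, ENNReal.ofReal (sm r) * Q t :=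
          (lintegral_const_mul' _ _ ENNReal.ofReal_ne_top).symm
      _ = ∫⁻ t in Ioi r ∩ Ioi (0:ℝ), ENNReal.ofReal (sm r) * Q t := by
          rw [Set.inter_eq_left.2 (Ioi_subset_Ioi hr.1.le)]
      _ = ∫⁻ t in Ioi (0:ℝ), (Ioi r).indicator (fun t => ENNReal.ofReal (sm r) * Q t) t := by
          rw [lintegral_indicator measurableSet_Ioi, Measure.restrict_restrict measurableSet_Ioi]
      _ = ∫⁻ t in Ioi (0:ℝ), F r t := by
          exact lintegral_congr fun t => (h1 t).symm
  have hswap : (∫⁻ r in Ioc (0:ℝ) R, ∫⁻ t in Ioi (0:ℝ), F r t)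
      = ∫⁻ t in Ioi (0:ℝ), ∫⁻ r in Ioc (0:ℝ) R, F r t :=
    lintegral_lintegral_swap hF_meas.aemeasurable
  have hinner : ∀ t : ℝ, t ∈ Ioi (0:ℝ) →
      (∫⁻ r in Ioc (0:ℝ) R, F r t) ≤ ENNReal.ofReal (Wm (min R t)) * Q t := by
    intro t ht
    have hmpos : 0 < min R t := lt_min hRpos ht
    have h1 : ∀ r : ℝ, F r t = (Iio t).indicator (fun r => ENNReal.ofReal (sm r) * Q t) r := by
      intro r
      simp [hFdef, Set.indicator_apply, Set.mem_Iio]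
    have h2 : (∫⁻ r in Ioc 0 (min R t), ENNReal.ofReal (sm r))
        = ENNReal.ofReal (Wm (min R t)) := by
      have e1 : (∫⁻ r in Ioc 0 (min R t), ENNReal.ofReal (sm r))
          = ∫⁻ r in Ioc 0 (min R t), ENNReal.ofReal (s x₀ r) :=
        setLIntegral_congr_fun measurableSet_Ioc
          (fun r hr => by simp only [hsm_eq r hr.1])
      have hnn : 0 ≤ᵐ[volume.restrict (Ioc (0:ℝ) (min R t))] s x₀ :=
        (ae_restrict_iff' measurableSet_Ioc).2 (ae_of_all _ fun r hr => hsf_nonneg r hr.1)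
      rw [e1, ← ofReal_integral_eq_lintegral_ofReal (hs_FTC _ hmpos).1 hnn,
        (hs_FTC _ hmpos).2, hWmW _ hmpos]
    calc (∫⁻ r in Ioc (0:ℝ) R, F r t)
        = ∫⁻ r in Ioc (0:ℝ) R, (Iio t).indicator (fun r => ENNReal.ofReal (sm r) * Q t) r :=
          lintegral_congr fun r => h1 r
      _ = ∫⁻ r in Iio t ∩ Ioc (0:ℝ) R, ENNReal.ofReal (sm r) * Q t := by
          rw [lintegral_indicator measurableSet_Iio, Measure.restrict_restrict measurableSet_Iio]
      _ ≤ ∫⁻ r in Ioc 0 (min R t), ENNReal.ofReal (sm r) * Q t := by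
          apply lintegral_mono_set
          intro r hr
          exact ⟨hr.2.1, le_min hr.2.2 (le_of_lt hr.1)⟩
      _ = (∫⁻ r in Ioc 0 (min R t), ENNReal.ofReal (sm r)) * Q t :=
          lintegral_mul_const' _ _ ENNReal.ofReal_ne_top
      _ = ENNReal.ofReal (Wm (min R t)) * Q t := by rw [h2]
  have hIoi_split : (∫⁻ t in Ioi (0:ℝ), ENNReal.ofReal (Wm (min R t)) * Q t)
      ≤ ENNReal.ofReal (R^2/2) + ENNReal.ofReal (V x₀ R * (∫ t in Ioi R, t / V x₀ t)) := by
    rw [← Ioc_union_Ioi_eq_Ioi hRpos.le,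
      lintegral_union measurableSet_Ioi (Ioc_disjoint_Ioi le_rfl)]
    have ha : (∫⁻ t in Ioc (0:ℝ) R, ENNReal.ofReal (Wm (min R t)) * Q t)
        = ENNReal.ofReal (R^2/2) := by
      have e1 : ∀ t ∈ Ioc (0:ℝ) R, ENNReal.ofReal (Wm (min R t)) * Q t = ENNReal.ofReal t := by
        intro t ht
        rw [min_eq_right ht.2]
        simp only [hQdef]
        rw [← ENNReal.ofReal_mul (by rw [hWmW t ht.1]; exact (hWpos t ht.1).le)]
        congr 1
        rw [hWmW t ht.1]
        field_simp
        rw [mul_comm (V x₀ t) t, mul_div_assoc, div_self (hWpos t ht.1).ne', mul_one]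
      rw [setLIntegral_congr_fun measurableSet_Ioc e1]
      have hid_int : IntegrableOn (fun t : ℝ => t) (Ioc 0 R) volume :=
        (continuous_id.integrableOn_Icc).mono_set Ioc_subset_Icc_self
      have hnn : 0 ≤ᵐ[volume.restrict (Ioc (0:ℝ) R)] fun t : ℝ => t :=
        (ae_restrict_iff' measurableSet_Ioc).2 (ae_of_all _ fun t ht => ht.1.le)
      rw [← ofReal_integral_eq_lintegral_ofReal hid_int hnn]
      congr 1
      rw [← intervalIntegral.integral_of_le hRpos.le, integral_id]
      ring
    have hb : (∫⁻ t in Ioi R, ENNReal.ofReal (Wm (min R t)) * Q t)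
        = ENNReal.ofReal (V x₀ R * (∫ t in Ioi R, t / V x₀ t)) := by
      have e1 : ∀ t ∈ Ioi R, ENNReal.ofReal (Wm (min R t)) * Q t
          = ENNReal.ofReal (V x₀ R) * Q t := by
        intro t ht
        rw [min_eq_left (le_of_lt ht), hWmW R hRpos]
      rw [setLIntegral_congr_fun measurableSet_Ioi e1,
        lintegral_const_mul' _ _ ENNReal.ofReal_ne_top]
      have : (∫⁻ t in Ioi R, Q t) = H R := rfl
      rw [this, hHofReal R hRpos, ← ENNReal.ofReal_mul (hWpos R hRpos).le]
    rw [ha, hb]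
  have hLB_le : LB ≤ ENNReal.ofReal (R^2/2)
      + ENNReal.ofReal (V x₀ R * (∫ t in Ioi R, t / V x₀ t)) := by
    rw [hstep1, hswap]
    refine le_trans ?_ hIoi_split
    apply setLIntegral_mono
      ((ENNReal.measurable_ofReal.comp (hWm_meas.comp (measurable_const.min measurable_id))).mul
        hQ_meas)
    exact hinner
  have hLB_fin : LB ≠ ⊤ :=
    (lt_of_le_of_lt hLB_le (ENNReal.add_lt_top.2 ⟨ENNReal.ofReal_lt_top, ENNReal.ofReal_lt_top⟩)).ne
  have hB_le : B ≤ R^2/2 + V x₀ R * (∫ t in Ioi R, t / V x₀ t) := by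
    rw [hB_eq]
    apply ENNReal.toReal_le_of_le_ofReal
    · exact add_nonneg (by positivity) (mul_nonneg (hWpos R hRpos).le (hh_nonneg R hRpos.le))
    · rw [ENNReal.ofReal_add (by positivity)
        (mul_nonneg (hWpos R hRpos).le (hh_nonneg R hRpos.le))]
      exact hLB_le
  -- bound the tail term using the uniformity hypothesis
  have hI_nonneg : 0 ≤ ∫ t in Ioi R, 1 / f t := by
    apply setIntegral_nonneg measurableSet_Ioi
    intro t ht
    exact div_nonneg zero_le_one (hf_pos t (le_trans hRR₀ ht.le)).le
  have hhR_le : (∫ t in Ioi R, t / V x₀ t)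
      ≤ γ * (R * f R) / V x₀ R * (∫ t in Ioi R, 1 / f t) := by
    rw [← integral_const_mul]
    apply setIntegral_mono_on (htW_int R hRpos)
      ((hf_int.mono_set (Ioi_subset_Ioi hRR₀)).const_mul _) measurableSet_Ioi
    intro t ht
    have htpos : 0 < t := lt_trans hRpos ht
    have hft : 0 < f t := hf_pos t (le_trans hRR₀ (le_of_lt ht))
    have hWt : 0 < V x₀ t := hWpos t htpos
    have hWR : 0 < V x₀ R := hWpos R hRpos
    have hu := huniform x₀ R t hRR₀ (le_of_lt ht)
    rw [mul_one_div, le_div_iff₀ hft]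
    have he : t / V x₀ t * f t = t * f t / V x₀ t := by ring
    rw [he]
    calc t * f t / V x₀ t ≤ γ * (R * f R / V x₀ R) := hu
      _ = γ * (R * f R) / V x₀ R := by ring
  have hWRhR : V x₀ R * (∫ t in Ioi R, t / V x₀ t)
      ≤ γ * (R * f R) * (∫ t in Ioi R, 1 / f t) := by
    have hWR : 0 < V x₀ R := hWpos R hRpos
    calc V x₀ R * (∫ t in Ioi R, t / V x₀ t)
        ≤ V x₀ R * (γ * (R * f R) / V x₀ R * (∫ t in Ioi R, 1 / f t)) :=
          mul_le_mul_of_nonneg_left hhR_le hWR.le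
      _ = γ * (R * f R) * (∫ t in Ioi R, 1 / f t) := by
          field_simp
  -- gm is integrable on the ball
  set A : ℕ → Set M := fun n => Metric.ball x₀ R ∩ {x | 1/(n+1 : ℝ) ≤ dist x x₀} with hAdef
  have hA_meas : ∀ n, MeasurableSet (A n) :=
    fun n => hball_meas.inter (hdist_meas measurableSet_Ici)
  have hA_sub : ∀ n, A n ⊆ Metric.ball x₀ R := fun n => inter_subset_left
  have hA_mono : Monotone A := by
    intro n m hnm
    apply inter_subset_inter_right
    intro x hx
    have hx' : 1/(n+1:ℝ) ≤ dist x x₀ := hx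
    show 1/(m+1:ℝ) ≤ dist x x₀
    refine le_trans ?_ hx'
    apply one_div_le_one_div_of_le (by positivity)
    have : (n:ℝ) ≤ m := Nat.cast_le.2 hnm
    linarith
  have hgm_int_A : ∀ n : ℕ, IntegrableOn gm (A n) μ := by
    intro n
    have hpos : (0:ℝ) < 1/(n+1) := by positivity
    apply Measure.integrableOn_of_bounded (M := (H (1/(n+1 : ℝ))).toReal)
    · exact ((measure_mono (hA_sub n)).trans_lt (hball_fin R hRpos)).ne
    · exact hgm_meas.aestronglyMeasurable
    · refine (ae_restrict_iff' (hA_meas n)).2 (ae_of_all _ fun x hx => ?_)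
      rw [Real.norm_eq_abs, abs_of_nonneg (hgm_nonneg x)]
      exact ENNReal.toReal_mono (hH_fin _ hpos) (hH_anti hx.2)
  have hBint : IntegrableOn (fun r => s x₀ r * φs r) (Ioc 0 R) volume := by
    refine ⟨hB_meas_ae, ?_⟩
    rw [hasFiniteIntegral_iff_ofReal hB_nn_ae]
    rw [hB_lint]
    exact hLB_fin.lt_top
  have hAn_val : ∀ n : ℕ, (∫ x in A n, gm x ∂μ) ≤ B := by
    intro n
    set φn : ℝ → ℝ := fun r => if 1/(n+1 : ℝ) ≤ r then φs r else 0 with hφndef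
    have hφn_meas : Measurable φn := by
      apply Measurable.ite ?_ hφs_meas measurable_const
      exact measurableSet_Ici
    have h1 : (∫ x in Metric.ball x₀ R, φn (dist x x₀) ∂μ) = ∫ x in A n, gm x ∂μ := by
      have he : (fun x : M => φn (dist x x₀))
          = fun x => Set.indicator {x : M | 1/(n+1:ℝ) ≤ dist x x₀} gm x := by
        funext x
        by_cases hx : 1/(n+1:ℝ) ≤ dist x x₀ <;>
          simp [hφndef, Set.indicator_apply, hx, hgmdef]
      have hSmeas : MeasurableSet {x : M | 1/(n+1:ℝ) ≤ dist x x₀} :=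
        hdist_meas measurableSet_Ici
      rw [he, setIntegral_indicator hSmeas]
    have h2 := hcoarea x₀ R φn hRpos
    rw [h1] at h2
    rw [h2]
    have hφn_int : IntegrableOn (fun r => s x₀ r * φn r) (Ioc 0 R) volume := by
      apply Integrable.mono' hBint
      · apply ((hsm_meas.mul hφn_meas).aestronglyMeasurable).congr
        filter_upwards [hmem_Ioc] with r hr
        rw [Pi.mul_apply, hsm_eq r hr.1]
      · filter_upwards [hmem_Ioc] with r hr
        simp only [hφndef]
        split_ifs with hcase
        · rw [Real.norm_eq_abs,
            abs_of_nonneg (mul_nonneg (hsf_nonneg r hr.1) ENNReal.toReal_nonneg)]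
        · simp only [mul_zero, norm_zero]
          exact mul_nonneg (hsf_nonneg r hr.1) ENNReal.toReal_nonneg
    apply setIntegral_mono_on hφn_int hBint measurableSet_Ioc
    intro r hr
    simp only [hφndef]
    split_ifs with hcase
    · exact le_refl _
    · rw [mul_zero]
      exact mul_nonneg (hsf_nonneg r hr.1) ENNReal.toReal_nonneg
  have hgm_int : IntegrableOn gm (Metric.ball x₀ R) μ := by
    refine ⟨hgm_meas.aestronglyMeasurable, ?_⟩
    rw [hasFiniteIntegral_iff_ofReal (ae_of_all _ hgm_nonneg)]
    have hae : ∀ᵐ x ∂(μ.restrict (Metric.ball x₀ R)),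
        ENNReal.ofReal (gm x) = ⨆ n, (A n).indicator (fun y => ENNReal.ofReal (gm y)) x := by
      filter_upwards [hne_ball, ae_restrict_mem hball_meas] with x hx hxball
      have hd : 0 < dist x x₀ := dist_pos.2 hx
      obtain ⟨n, hn⟩ := exists_nat_one_div_lt hd
      have hmem : x ∈ A n := Set.mem_inter hxball (le_of_lt hn)
      apply le_antisymm
      · refine le_iSup_of_le n ?_
        rw [Set.indicator_of_mem hmem]
      · exact iSup_le fun m => Set.indicator_le_self _ _ x
    rw [lintegral_congr_ae hae]
    have him := lintegral_iSup (μ := μ.restrict (Metric.ball x₀ R))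
      (f := fun n => fun x => (A n).indicator (fun y => ENNReal.ofReal (gm y)) x)
      (fun n => (ENNReal.measurable_ofReal.comp hgm_meas).indicator (hA_meas n))
      (fun n m hnm x => Set.indicator_le_indicator_of_subset (hA_mono hnm)
        (fun _ => zero_le) x)
    rw [him]
    refine lt_of_le_of_lt (iSup_le fun n => ?_) (@ENNReal.ofReal_lt_top B)
    rw [lintegral_indicator (hA_meas n), Measure.restrict_restrict (hA_meas n),
      Set.inter_eq_left.2 (hA_sub n),
      ← ofReal_integral_eq_lintegral_ofReal (hgm_int_A n) (ae_of_all _ hgm_nonneg)]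
    exact ENNReal.ofReal_le_ofReal (hAn_val n)
  -- the main comparison
  have hGB : (∫ x in Metric.ball x₀ R, G x x₀ ∂μ) ≤ c₂ * B := by
    by_cases hGint : IntegrableOn (fun x => G x x₀) (Metric.ball x₀ R) μ
    · have hmono : (∫ x in Metric.ball x₀ R, G x x₀ ∂μ)
          ≤ ∫ x in Metric.ball x₀ R, c₂ * gm x ∂μ := by
        apply integral_mono_ae hGint (hgm_int.const_mul c₂)
        filter_upwards [hne_ball] with x hx
        have := hGreen x x₀ hx
        rw [hgm_eq x hx]
        exact this
      calc (∫ x in Metric.ball x₀ R, G x x₀ ∂μ)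
          ≤ ∫ x in Metric.ball x₀ R, c₂ * gm x ∂μ := hmono
        _ = c₂ * ∫ x in Metric.ball x₀ R, gm x ∂μ := integral_const_mul c₂ _
        _ = c₂ * B := by rw [hgmdef]; rw [hcoareaB]
    · rw [integral_undef hGint]
      exact mul_nonneg hc₂.le hB_nonneg
  -- final arithmetic
  have h1 : B ≤ γ * (R * f R) * (∫ t in Ioi R, 1 / f t) + R^2/2 := by
    linarith [hB_le, hWRhR]
  have hm1 : γ ≤ max γ (1/2) := le_max_left _ _
  have hm2 : (1/2 : ℝ) ≤ max γ (1/2) := le_max_right _ _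
  have hRf : 0 ≤ R * f R * (∫ t in Ioi R, 1 / f t) :=
    mul_nonneg (mul_nonneg hRpos.le (hf_pos R hRR₀).le) hI_nonneg
  have h2 : γ * (R * f R) * (∫ t in Ioi R, 1 / f t) + R^2/2
      ≤ max γ (1/2) * (R * f R * (∫ t in Ioi R, 1 / f t) + R^2) := by
    nlinarith [mul_nonneg (sub_nonneg.2 hm1) hRf,
      mul_nonneg (sub_nonneg.2 hm2) (sq_nonneg R)]
  calc (∫ x in Metric.ball x₀ R, G x x₀ ∂μ) ≤ c₂ * B := hGB
    _ ≤ c₂ * (γ * (R * f R) * (∫ t in Ioi R, 1 / f t) + R^2/2) :=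
        mul_le_mul_of_nonneg_left h1 hc₂.le
    _ ≤ c₂ * (max γ (1/2) * (R * f R * (∫ t in Ioi R, 1 / f t) + R^2)) :=
        mul_le_mul_of_nonneg_left h2 hc₂.le
    _ = c₂ * max γ (1/2) * (R * f R * (∫ t in Ioi R, 1 / f t) + R^2) := by ring
end

section
/- Assume the heat kernel bound K(x,y,t) ≤ Ĉ/φ(t) where φ(t) = t^{n/2} for 0 < t < R₀² and φ(t) = √t · f(√t) for t ≥ R₀², with ∫_{R₀}^∞ ds/f(s) = β < ∞. Then the operator (−Δ)^{−1}u = ∫_0^∞ T_t u dt maps L¹ ∩ L^∞ continuously into L^∞, with ‖(−Δ)^{−1}u‖_∞ ≤ max{R₀², 2βĈ}(‖u‖_∞ + ‖u‖₁), and ∫_0^r T_t u dt converges to (−Δ)^{−1}u in L^∞ as r → ∞. -/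
open MeasureTheory Set Filter

lemma sq_image_Ioi' {a : ℝ} (ha : 0 ≤ a) :
    (fun s : ℝ => s ^ 2) '' Set.Ioi a = Set.Ioi (a ^ 2) := by
  ext y
  constructor
  · rintro ⟨s, hs, rfl⟩
    exact pow_lt_pow_left₀ hs ha (by norm_num)
  · intro hy
    have hy0 : 0 ≤ y := le_trans (sq_nonneg a) hy.le
    exact ⟨Real.sqrt y, (Real.lt_sqrt ha).2 hy, Real.sq_sqrt hy0⟩


/-- assume the heat semigroup bounds `‖T_t u‖_∞ ≤ ‖u‖_∞` and
`‖T_t u‖_∞ ≤ Chat/φ(t) ‖u‖₁` with `φ(t) = t^{n/2}` for `0 < t < R₀²` and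
`φ(t) = √t f(√t)` for `t ≥ R₀²`, and `β = ∫_{R₀}^∞ ds/f(s) < ∞`. Then
`(−Δ)⁻¹u = ∫_0^∞ T_t u dt` is well defined with
`‖(−Δ)⁻¹u‖_∞ ≤ max{R₀², 2βChat}(‖u‖_∞ + ‖u‖₁)`, and `∫_0^r T_t u dt → (−Δ)⁻¹u` in `L^∞`. -/
theorem stmt_9 {M : Type*} (T : ℝ → (M → ℝ) → M → ℝ) (u : M → ℝ)
    (f : ℝ → ℝ) (n : ℕ) (hn : 3 ≤ n) (Chat R₀ β NuInf Nu1 : ℝ)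
    (hChat : 0 < Chat) (hR₀ : 1 ≤ R₀) (hNuInf : 0 ≤ NuInf) (hNu1 : 0 ≤ Nu1)
    (hf_pos : ∀ t, R₀ ≤ t → 0 < f t)
    (hf_mono : MonotoneOn f (Set.Ici R₀))
    (hf_int : MeasureTheory.IntegrableOn (fun t => 1 / f t) (Set.Ioi R₀))
    (hβ : β = ∫ t in Set.Ioi R₀, 1 / f t)
    (hmeas : ∀ x : M, Measurable (fun t => T t u x))
    (hsup : ∀ t : ℝ, 0 < t → ∀ x : M, |T t u x| ≤ NuInf)
    (hkernel_small : ∀ t : ℝ, 0 < t → t < R₀ ^ 2 → ∀ x : M,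
      |T t u x| ≤ Chat / t ^ ((n : ℝ) / 2) * Nu1)
    (hkernel_large : ∀ t : ℝ, R₀ ^ 2 ≤ t → ∀ x : M,
      |T t u x| ≤ Chat / (Real.sqrt t * f (Real.sqrt t)) * Nu1) :
    (∀ x : M, MeasureTheory.IntegrableOn (fun t => T t u x) (Set.Ioi 0)) ∧
    (∀ x : M, |∫ t in Set.Ioi 0, T t u x| ≤ max (R₀ ^ 2) (2 * β * Chat) * (NuInf + Nu1)) ∧
    Tendsto (fun r : ℝ => ⨆ x : M,
        |(∫ t in Set.Ioc 0 r, T t u x) - ∫ t in Set.Ioi 0, T t u x|)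
      atTop (nhds 0) := by
  have hR0pos : (0:ℝ) < R₀ := lt_of_lt_of_le one_pos hR₀
  have hR₀2 : (0:ℝ) < R₀ ^ 2 := by positivity
  set g : ℝ → ℝ := fun t => Chat / (Real.sqrt t * f (Real.sqrt t)) * Nu1 with hg
  -- properties of g on [R₀², ∞)
  have hsqrt_ge : ∀ t : ℝ, R₀ ^ 2 ≤ t → R₀ ≤ Real.sqrt t := fun t ht =>
    (Real.le_sqrt' hR0pos).2 ht
  have hg_nonneg : ∀ t : ℝ, R₀ ^ 2 ≤ t → 0 ≤ g t := by
    intro t ht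
    have h1 := hsqrt_ge t ht
    have h2 := hf_pos _ h1
    exact mul_nonneg (div_nonneg hChat.le
      (mul_nonneg (Real.sqrt_nonneg t) h2.le)) hNu1
  -- change of variables setup
  have hderiv : ∀ x ∈ Set.Ioi R₀, HasDerivWithinAt (fun s : ℝ => s ^ 2) (2 * x)
      (Set.Ioi R₀) x := by
    intro x hx
    simpa using (hasDerivAt_pow 2 x).hasDerivWithinAt
  have hmono : StrictMonoOn (fun s : ℝ => s ^ 2) (Set.Ioi R₀) :=
    fun a ha b hb hab => pow_lt_pow_left₀ hab (hR0pos.trans ha).le (by norm_num)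
  have hinj : Set.InjOn (fun s : ℝ => s ^ 2) (Set.Ioi R₀) := hmono.injOn
  have heqOn : Set.EqOn (fun x => (2 * Chat * Nu1) * (1 / f x))
      (fun x => |2 * x| • g (x ^ 2)) (Set.Ioi R₀) := by
    intro x hx
    have hx0 : 0 < x := hR0pos.trans hx
    have hfx : 0 < f x := hf_pos x hx.le
    have hsq : Real.sqrt (x ^ 2) = x := Real.sqrt_sq hx0.le
    simp only [hg, smul_eq_mul, hsq, abs_of_pos (by linarith : (0:ℝ) < 2 * x)]
    field_simp
  have hInt2 : IntegrableOn g (Set.Ioi (R₀ ^ 2)) := by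
    rw [← sq_image_Ioi' hR0pos.le]
    refine (integrableOn_image_iff_integrableOn_abs_deriv_smul measurableSet_Ioi hderiv hinj g).2 ?_
    exact IntegrableOn.congr_fun (hf_int.const_mul (2 * Chat * Nu1)) heqOn measurableSet_Ioi
  have hIntEq : ∫ t in Set.Ioi (R₀ ^ 2), g t = 2 * β * Chat * Nu1 := by
    rw [← sq_image_Ioi' hR0pos.le,
      integral_image_eq_integral_abs_deriv_smul measurableSet_Ioi hderiv hinj g,
      ← setIntegral_congr_fun measurableSet_Ioi heqOn, integral_const_mul, hβ]
    ring
  -- integrability of the integrand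
  have hIntSmall : ∀ x : M, IntegrableOn (fun t => T t u x) (Set.Ioc 0 (R₀ ^ 2)) := by
    intro x
    refine Integrable.mono' ((integrableOn_const (C := NuInf) measure_Ioc_lt_top.ne))
      ((hmeas x).aestronglyMeasurable.restrict) ?_
    filter_upwards [ae_restrict_mem measurableSet_Ioc] with t ht
    rw [Real.norm_eq_abs]
    exact hsup t ht.1 x
  have hIntLargeOn : ∀ x : M, ∀ r : ℝ, R₀ ^ 2 ≤ r →
      IntegrableOn (fun t => T t u x) (Set.Ioi r) := by
    intro x r hr
    refine Integrable.mono' (hInt2.mono_set (Set.Ioi_subset_Ioi hr))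
      ((hmeas x).aestronglyMeasurable.restrict) ?_
    filter_upwards [ae_restrict_mem measurableSet_Ioi] with t ht
    rw [Real.norm_eq_abs]
    exact hkernel_large t (hr.trans ht.le) x
  have hIntAll : ∀ x : M, IntegrableOn (fun t => T t u x) (Set.Ioi 0) := by
    intro x
    rw [← Set.Ioc_union_Ioi_eq_Ioi hR₀2.le]
    exact (hIntSmall x).union (hIntLargeOn x _ le_rfl)
  refine ⟨hIntAll, ?_, ?_⟩
  · -- the bound
    intro x
    have hsplit : ∫ t in Set.Ioi 0, T t u x =
        (∫ t in Set.Ioc 0 (R₀ ^ 2), T t u x) + ∫ t in Set.Ioi (R₀ ^ 2), T t u x := by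
      rw [← setIntegral_union (Set.Ioc_disjoint_Ioi le_rfl) measurableSet_Ioi
        (hIntSmall x) (hIntLargeOn x _ le_rfl), Set.Ioc_union_Ioi_eq_Ioi hR₀2.le]
    have h1 : |∫ t in Set.Ioc 0 (R₀ ^ 2), T t u x| ≤ R₀ ^ 2 * NuInf := by
      have := norm_setIntegral_le_of_norm_le_const (μ := volume)
        (s := Set.Ioc 0 (R₀ ^ 2)) (f := fun t => T t u x)
        measure_Ioc_lt_top (C := NuInf) (fun t ht => by
          rw [Real.norm_eq_abs]; exact hsup t ht.1 x)
      rw [Real.norm_eq_abs] at this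
      calc |∫ t in Set.Ioc 0 (R₀ ^ 2), T t u x| ≤ NuInf * (volume (Set.Ioc (0:ℝ) (R₀ ^ 2))).toReal := this
        _ = R₀ ^ 2 * NuInf := by
            rw [Real.volume_Ioc, ENNReal.toReal_ofReal (by linarith)]
            ring
    have h2 : |∫ t in Set.Ioi (R₀ ^ 2), T t u x| ≤ 2 * β * Chat * Nu1 := by
      rw [← hIntEq, ← Real.norm_eq_abs]
      refine norm_integral_le_of_norm_le hInt2 ?_
      filter_upwards [ae_restrict_mem measurableSet_Ioi] with t ht
      rw [Real.norm_eq_abs]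
      exact hkernel_large t ht.le x
    have hβ0 : 0 ≤ β := by
      rw [hβ]
      refine setIntegral_nonneg measurableSet_Ioi fun t ht => ?_
      exact (div_nonneg zero_le_one (hf_pos t ht.le).le)
    have hm1 : R₀ ^ 2 ≤ max (R₀ ^ 2) (2 * β * Chat) := le_max_left _ _
    have hm2 : 2 * β * Chat ≤ max (R₀ ^ 2) (2 * β * Chat) := le_max_right _ _
    calc |∫ t in Set.Ioi 0, T t u x|
        ≤ |∫ t in Set.Ioc 0 (R₀ ^ 2), T t u x| + |∫ t in Set.Ioi (R₀ ^ 2), T t u x| := by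
          rw [hsplit]; exact abs_add_le _ _
      _ ≤ R₀ ^ 2 * NuInf + 2 * β * Chat * Nu1 := add_le_add h1 h2
      _ ≤ max (R₀ ^ 2) (2 * β * Chat) * (NuInf + Nu1) := by nlinarith
  · -- the convergence
    have htail : Tendsto (fun r => (∫ t in Set.Ioi (R₀ ^ 2), g t) - ∫ t in (R₀ ^ 2)..r, g t)
        atTop (nhds 0) := by
      have := (intervalIntegral_tendsto_integral_Ioi (R₀ ^ 2) hInt2 tendsto_id).const_sub
        (∫ t in Set.Ioi (R₀ ^ 2), g t)
      simpa using this
    refine squeeze_zero' ?_ ?_ htail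
    · filter_upwards with r
      exact Real.iSup_nonneg fun x => abs_nonneg _
    · filter_upwards [eventually_ge_atTop (R₀ ^ 2)] with r hr
      have hgr : IntegrableOn g (Set.Ioi r) := hInt2.mono_set (Set.Ioi_subset_Ioi hr)
      have hgsplit : ∫ t in Set.Ioi (R₀ ^ 2), g t =
          (∫ t in Set.Ioc (R₀ ^ 2) r, g t) + ∫ t in Set.Ioi r, g t := by
        rw [← setIntegral_union (Set.Ioc_disjoint_Ioi le_rfl) measurableSet_Ioi
          (hInt2.mono_set Set.Ioc_subset_Ioi_self) hgr, Set.Ioc_union_Ioi_eq_Ioi hr]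
      have hbound_eq : (∫ t in Set.Ioi (R₀ ^ 2), g t) - ∫ t in (R₀ ^ 2)..r, g t
          = ∫ t in Set.Ioi r, g t := by
        rw [intervalIntegral.integral_of_le hr, hgsplit]
        ring
      rw [hbound_eq]
      refine Real.iSup_le (fun x => ?_)
        (setIntegral_nonneg measurableSet_Ioi fun t ht => hg_nonneg t (hr.trans ht.le))
      have hr0 : (0:ℝ) < r := hR₀2.trans_le hr
      have hTsplit : ∫ t in Set.Ioi 0, T t u x =
          (∫ t in Set.Ioc 0 r, T t u x) + ∫ t in Set.Ioi r, T t u x := by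
        rw [← setIntegral_union (Set.Ioc_disjoint_Ioi le_rfl) measurableSet_Ioi
          ((hIntAll x).mono_set Set.Ioc_subset_Ioi_self) (hIntLargeOn x r hr),
          Set.Ioc_union_Ioi_eq_Ioi hr0.le]
      have : |(∫ t in Set.Ioc 0 r, T t u x) - ∫ t in Set.Ioi 0, T t u x|
          = |∫ t in Set.Ioi r, T t u x| := by
        rw [hTsplit]
        rw [abs_sub_comm]
        congr 1
        ring
      rw [this, ← Real.norm_eq_abs]
      refine norm_integral_le_of_norm_le hgr ?_
      filter_upwards [ae_restrict_mem measurableSet_Ioi] with t ht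
      rw [Real.norm_eq_abs]
      exact hkernel_large t (hr.trans ht.le) x
end

section
/- Under the running assumptions (Ric ≥ 0, non-collapsing, uniformity and integrability of f), the strict inclusion L¹(M) ⊊ L¹_G(M) holds: there exists a nonnegative bounded measurable function v on M with ∫_M v dμ = +∞ but sup_{x₀∈M} ‖v‖_{L¹_{x₀,G}} < ∞. Such v can be taken of the form v = Σ_j χ_{B_1(o_j)} for a sufficiently separated sequence of centers o_j. -/
open MeasureTheory Set ENNReal

/-- under the running assumptions (non-collapsing, uniformity and
integrability of `f`, two-sided Li–Yau Green bounds, `M` unbounded), the strict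
inclusion `L¹(M) ⊊ L¹_G(M)` holds: there is a nonnegative bounded measurable `v`
with `∫ v dμ = ∞` but `sup_{x₀} ‖v‖_{L¹_{x₀,G}} < ∞`. -/
theorem stmt_10 {M : Type*} [MetricSpace M] [MeasurableSpace M] [BorelSpace M] [Nonempty M]
    (μ : MeasureTheory.Measure M) (G : M → M → ℝ) (f : ℝ → ℝ)
    (n : ℕ) (hn : 3 ≤ n) (c₁ c₂ c₃ α γ R₀ : ℝ)
    (hc₁ : 0 < c₁) (hc₂ : 0 < c₂) (hc₃ : 0 < c₃) (hα : 0 < α) (hγ : 0 < γ)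
    (hR₀ : 1 ≤ R₀)
    (hunbounded : ¬ Bornology.IsBounded (Set.univ : Set M))
    (hG_nonneg : ∀ x x₀ : M, 0 ≤ G x x₀)
    (hV_pos : ∀ (x : M) (r : ℝ), 0 < r → 0 < (μ (Metric.ball x r)).toReal)
    (hnc : ∀ x : M, α ≤ (μ (Metric.ball x 1)).toReal)
    (hdoub : ∀ (x : M) (r : ℝ), 0 < r →
      (μ (Metric.ball x (2 * r))).toReal ≤ c₃ * (μ (Metric.ball x r)).toReal)
    (hf_pos : ∀ t, R₀ ≤ t → 0 < f t)
    (hf_mono : MonotoneOn f (Set.Ici R₀))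
    (hf_int : MeasureTheory.IntegrableOn (fun t => 1 / f t) (Set.Ioi R₀))
    (huniform : ∀ (x : M) (r R : ℝ), R₀ ≤ r → r ≤ R →
      R * f R / (μ (Metric.ball x R)).toReal ≤ γ * (r * f r / (μ (Metric.ball x r)).toReal))
    (hGreen_low : ∀ x x₀ : M, x ≠ x₀ →
      c₁ * (∫ t in Set.Ioi (dist x x₀), t / (μ (Metric.ball x₀ t)).toReal) ≤ G x x₀)
    (hGreen_up : ∀ x x₀ : M, x ≠ x₀ →
      G x x₀ ≤ c₂ * ∫ t in Set.Ioi (dist x x₀), t / (μ (Metric.ball x₀ t)).toReal) :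
    ∃ v : M → ℝ, Measurable v ∧ (∀ x, 0 ≤ v x) ∧ (∃ Cb : ℝ, ∀ x, v x ≤ Cb) ∧
      (∫⁻ x, ENNReal.ofReal (v x) ∂μ) = ⊤ ∧
      ∃ C : ℝ≥0∞, C ≠ ⊤ ∧ ∀ x₀ : M,
        (∫⁻ x in Metric.ball x₀ 1, ENNReal.ofReal (v x) ∂μ) +
          (∫⁻ x in (Metric.ball x₀ 1)ᶜ, ENNReal.ofReal (v x * G x x₀) ∂μ) ≤ C := by
  classical
  -- the tail function F
  set F : ℝ → ℝ := fun b => ∫ t in Set.Ioi b, 1 / f t with hFdef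
  have hint : ∀ b, R₀ ≤ b → IntegrableOn (fun t => 1 / f t) (Set.Ioi b) :=
    fun b hb => hf_int.mono_set (Set.Ioi_subset_Ioi hb)
  have hfn : ∀ t, R₀ ≤ t → 0 ≤ 1 / f t := fun t ht => le_of_lt (one_div_pos.mpr (hf_pos t ht))
  have hFsplit : ∀ a b, R₀ ≤ a → a ≤ b →
      F a = (∫ t in Set.Ioc a b, 1 / f t) + F b := by
    intro a b ha hab
    have hs : Set.Ioi a = Set.Ioc a b ∪ Set.Ioi b := (Set.Ioc_union_Ioi_eq_Ioi hab).symm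
    have h1 : IntegrableOn (fun t => 1 / f t) (Set.Ioc a b) :=
      (hint a ha).mono_set Set.Ioc_subset_Ioi_self
    simp only [hFdef]
    rw [hs, setIntegral_union (Set.Ioc_disjoint_Ioi le_rfl) measurableSet_Ioi h1 (hint b (ha.trans hab))]
  have hFanti : ∀ a b, R₀ ≤ a → a ≤ b → F b ≤ F a := by
    intro a b ha hab
    rw [hFsplit a b ha hab]
    have : 0 ≤ ∫ t in Set.Ioc a b, 1 / f t :=
      setIntegral_nonneg measurableSet_Ioc fun t ht => hfn t (ha.trans ht.1.le)
    linarith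
  have hFnn : ∀ b, R₀ ≤ b → 0 ≤ F b := fun b hb =>
    setIntegral_nonneg measurableSet_Ioi fun t ht => hfn t (hb.trans ht.le)
  have hFtend : Filter.Tendsto F Filter.atTop (nhds 0) := by
    have h1 := intervalIntegral_tendsto_integral_Ioi R₀ hf_int Filter.tendsto_id
    have h2 : Filter.Tendsto (fun b => F R₀ - ∫ t in R₀..b, 1 / f t) Filter.atTop
        (nhds (F R₀ - ∫ t in Set.Ioi R₀, 1 / f t)) := Filter.Tendsto.sub tendsto_const_nhds h1
    have h3 : F R₀ - (∫ t in Set.Ioi R₀, 1 / f t) = 0 := by simp [hFdef]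
    rw [h3] at h2
    refine h2.congr' ?_
    filter_upwards [Filter.eventually_ge_atTop R₀] with b hb
    rw [intervalIntegral.integral_of_le hb]
    have := hFsplit R₀ b le_rfl hb
    linarith
  -- choose the scales s j
  have hs_ex : ∀ j : ℕ, ∃ sj : ℝ, R₀ ≤ sj ∧ F sj ≤ (2⁻¹ : ℝ) ^ j := by
    intro j
    have hpos : (0 : ℝ) < (2⁻¹ : ℝ) ^ j := by positivity
    have h1 : ∀ᶠ b in Filter.atTop, F b < (2⁻¹ : ℝ) ^ j := hFtend.eventually_lt_const hpos
    obtain ⟨b, hb1, hb2⟩ := (h1.and (Filter.eventually_ge_atTop R₀)).exists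
    exact ⟨b, hb2, hb1.le⟩
  choose s hsR hsF using hs_ex
  have hs0 : ∀ i, 0 ≤ s i := fun i => le_trans (by linarith) (hsR i)
  -- separation radii D
  obtain ⟨D, hD4, hDmono, hDs, hDR⟩ : ∃ D : ℕ → ℝ, (∀ j, 4 ≤ D j) ∧ Monotone D ∧
      (∀ j, s j + 1 ≤ D j / 2) ∧ (∀ j, R₀ + 1 ≤ D j / 2) := by
    have hsum_nn : ∀ j : ℕ, 0 ≤ ∑ i ∈ Finset.range (j + 1), s i :=
      fun j => Finset.sum_nonneg fun i _ => hs0 i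
    refine ⟨fun j => 4 + 2 * R₀ + 2 * ∑ i ∈ Finset.range (j + 1), s i,
      fun j => ?_, fun j k hjk => ?_, fun j => ?_, fun j => ?_⟩
    · have := hsum_nn j; dsimp only; nlinarith
    · dsimp only
      have : (∑ i ∈ Finset.range (j + 1), s i) ≤ ∑ i ∈ Finset.range (k + 1), s i :=
        Finset.sum_le_sum_of_subset_of_nonneg (Finset.range_subset_range.2 (by omega))
          (fun i _ _ => hs0 i)
      linarith
    · have h1 : s j ≤ ∑ i ∈ Finset.range (j + 1), s i :=
        Finset.single_le_sum (fun i _ => hs0 i) (Finset.self_mem_range_succ j)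
      dsimp only; nlinarith
    · have := hsum_nn j; dsimp only; nlinarith
  have hD0 : ∀ j, 0 ≤ D j := fun j => by linarith [hD4 j]
  -- the centers
  set c : M := Classical.arbitrary M with hcdef
  have hex : ∀ r : ℝ, ∃ x : M, r < dist x c := by
    intro r
    by_contra h
    push_neg at h
    exact hunbounded ((Metric.isBounded_iff_subset_closedBall c).mpr
      ⟨r, fun x _ => Metric.mem_closedBall.mpr (h x)⟩)
  obtain ⟨o, ho⟩ : ∃ o : ℕ → M, ∀ m : ℕ, dist (o m) c + D (m + 1) < dist (o (m + 1)) c := by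
    refine ⟨fun m => Nat.rec c (fun m p => Classical.choose (hex (dist p c + D (m + 1)))) m,
      fun m => ?_⟩
    exact Classical.choose_spec (hex _)
  have hdist : ∀ j k, j < k → dist (o j) c + D k ≤ dist (o k) c := by
    intro j k hjk
    induction k with
    | zero => omega
    | succ k ih =>
      rcases Nat.lt_succ_iff_lt_or_eq.mp hjk with h | h
      · have h1 := ho k
        have h2 := ih h
        have h3 := hD0 k
        linarith
      · subst h; linarith [ho j]
  have sep : ∀ j k, j < k → D k ≤ dist (o j) (o k) := by
    intro j k h
    have h1 := hdist j k h
    have h2 := dist_triangle (o k) (o j) c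
    rw [dist_comm (o j) (o k)]
    linarith
  have sep' : ∀ j k, j ≠ k → D (max j k) ≤ dist (o j) (o k) := by
    intro j k hjk
    rcases lt_or_gt_of_ne hjk with h | h
    · rw [max_eq_right h.le]; exact sep j k h
    · rw [max_eq_left h.le, dist_comm]; exact sep k j h
  -- ball measures and weights
  have hBα : ∀ j, α ≤ (μ (Metric.ball (o j) 1)).toReal := fun j => hnc (o j)
  have hBpos : ∀ j, 0 < (μ (Metric.ball (o j) 1)).toReal := fun j => lt_of_lt_of_le hα (hBα j)
  have hBfin : ∀ j, μ (Metric.ball (o j) 1) ≠ ⊤ := by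
    intro j h
    have := hBpos j
    rw [h] at this
    simp at this
  have hBne : ∀ j, μ (Metric.ball (o j) 1) ≠ 0 := by
    intro j h
    have := hBpos j
    rw [h] at this
    simp at this
  set a : ℕ → ℝ := fun j => ((μ (Metric.ball (o j) 1)).toReal)⁻¹ with hadef
  have ha_nn : ∀ j, 0 ≤ a j := fun j => inv_nonneg.mpr (hBpos j).le
  have ha_le : ∀ j, a j ≤ α⁻¹ := fun j => inv_anti₀ hα (hBα j)
  have hkey : ∀ j, ENNReal.ofReal (a j) * μ (Metric.ball (o j) 1) = 1 := by
    intro j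
    have h1 : ENNReal.ofReal (a j) = (μ (Metric.ball (o j) 1))⁻¹ := by
      rw [hadef]
      simp only []
      rw [ENNReal.ofReal_inv_of_pos (hBpos j), ENNReal.ofReal_toReal (hBfin j)]
    rw [h1, ENNReal.inv_mul_cancel (hBne j) (hBfin j)]
  -- disjointness of balls
  have hdisj : ∀ j k, j ≠ k → ∀ x : M, x ∈ Metric.ball (o j) 1 → x ∉ Metric.ball (o k) 1 := by
    intro j k hjk x hj hk
    have h1 := sep' j k hjk
    have h2 : dist (o j) (o k) ≤ dist (o j) x + dist x (o k) := dist_triangle _ _ _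
    have h3 : dist (o j) x < 1 := by rw [dist_comm]; exact Metric.mem_ball.mp hj
    have h4 : dist x (o k) < 1 := Metric.mem_ball.mp hk
    have h5 := hD4 (max j k)
    linarith
  -- the function
  set w : M → ℝ≥0∞ := fun x =>
    ∑' j, (Metric.ball (o j) 1).indicator (fun _ => ENNReal.ofReal (a j)) x with hwdef
  have hw_meas : Measurable w :=
    Measurable.ennreal_tsum fun j => measurable_const.indicator measurableSet_ball
  have hwx : ∀ j (x : M), x ∈ Metric.ball (o j) 1 → w x = ENNReal.ofReal (a j) := by
    intro j x hx
    rw [hwdef]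
    simp only []
    rw [tsum_eq_single j]
    · exact Set.indicator_of_mem hx _
    · intro k hk
      exact Set.indicator_of_notMem (hdisj j k (Ne.symm hk) x hx) _
  have hw0 : ∀ x : M, (∀ j, x ∉ Metric.ball (o j) 1) → w x = 0 := by
    intro x hx
    rw [hwdef]
    simp only []
    rw [ENNReal.tsum_eq_zero]
    intro j
    exact Set.indicator_of_notMem (hx j) _
  have hwb : ∀ x, w x ≤ ENNReal.ofReal α⁻¹ := by
    intro x
    by_cases hx : ∃ j, x ∈ Metric.ball (o j) 1
    · obtain ⟨j, hj⟩ := hx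
      rw [hwx j x hj]
      exact ENNReal.ofReal_le_ofReal (ha_le j)
    · push_neg at hx
      rw [hw0 x hx]
      exact zero_le
  have hwfin : ∀ x, w x ≠ ⊤ := fun x => ne_top_of_le_ne_top ENNReal.ofReal_ne_top (hwb x)
  refine ⟨fun x => (w x).toReal, hw_meas.ennreal_toReal, fun x => ENNReal.toReal_nonneg,
    ⟨α⁻¹, fun x => ?_⟩, ?_, ?_⟩
  · calc (w x).toReal ≤ (ENNReal.ofReal α⁻¹).toReal :=
        ENNReal.toReal_mono ENNReal.ofReal_ne_top (hwb x)
      _ = α⁻¹ := ENNReal.toReal_ofReal (inv_nonneg.mpr hα.le)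
  · -- total integral infinite
    have hvw : ∀ x, ENNReal.ofReal ((w x).toReal) = w x := fun x => ENNReal.ofReal_toReal (hwfin x)
    rw [lintegral_congr hvw, hwdef]
    simp only []
    rw [lintegral_tsum fun j =>
      (measurable_const.indicator measurableSet_ball).aemeasurable]
    have : ∀ j : ℕ, (∫⁻ x, (Metric.ball (o j) 1).indicator
        (fun _ => ENNReal.ofReal (a j)) x ∂μ) = 1 := by
      intro j
      rw [lintegral_indicator measurableSet_ball, setLIntegral_const]
      exact hkey j
    rw [tsum_congr this]
    exact ENNReal.tsum_const_eq_top_of_ne_zero one_ne_zero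
  · -- the uniform bound
    set K : ℝ := γ * (R₀ * f R₀ / α) with hKdef
    have hfR₀ : 0 < f R₀ := hf_pos R₀ le_rfl
    have hK0 : 0 ≤ K := by positivity
    set Gmax : ℝ := c₂ * (R₀ * R₀ / α + K * F R₀) with hGmaxdef
    have hGmax0 : 0 ≤ Gmax :=
      mul_nonneg hc₂.le (add_nonneg (by positivity) (mul_nonneg hK0 (hFnn R₀ le_rfl)))
    set S : ℝ≥0∞ := ∑' j : ℕ, ((2 : ℝ≥0∞)⁻¹) ^ j with hSdef
    have hSval : S = 2 := by
      rw [hSdef, ENNReal.tsum_geometric, ENNReal.one_sub_inv_two]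
      simp
    refine ⟨1 + ENNReal.ofReal Gmax + ENNReal.ofReal (c₂ * K) * S, ?_, ?_⟩
    · rw [hSval]
      refine ENNReal.add_ne_top.mpr ⟨ENNReal.add_ne_top.mpr ⟨one_ne_top, ofReal_ne_top⟩, ?_⟩
      exact ENNReal.mul_ne_top ofReal_ne_top (by norm_num)
    intro x₀
    -- volume facts around x₀
    have Vfin : ∀ t : ℝ, μ (Metric.ball x₀ t) ≠ ⊤ := by
      intro t
      have hb : 0 < (μ (Metric.ball x₀ (max t 1))).toReal :=
        hV_pos x₀ (max t 1) (lt_of_lt_of_le one_pos (le_max_right t 1))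
      have hfin : μ (Metric.ball x₀ (max t 1)) ≠ ⊤ := by
        intro h; rw [h] at hb; simp at hb
      exact ne_top_of_le_ne_top hfin (measure_mono (Metric.ball_subset_ball (le_max_left t 1)))
    have Vmono : Monotone (fun t => (μ (Metric.ball x₀ t)).toReal) := by
      intro t₁ t₂ h
      exact ENNReal.toReal_mono (Vfin t₂) (measure_mono (Metric.ball_subset_ball h))
    have Vmeas : Measurable (fun t => (μ (Metric.ball x₀ t)).toReal) := Vmono.measurable
    have Vlb : ∀ t : ℝ, 1 ≤ t → α ≤ (μ (Metric.ball x₀ t)).toReal :=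
      fun t ht => le_trans (hnc x₀) (Vmono ht)
    have Vpos : ∀ t : ℝ, 1 ≤ t → 0 < (μ (Metric.ball x₀ t)).toReal :=
      fun t ht => lt_of_lt_of_le hα (Vlb t ht)
    -- key pointwise bound for the integrand
    have hkey2 : ∀ t : ℝ, R₀ ≤ t → t / (μ (Metric.ball x₀ t)).toReal ≤ K * (1 / f t) := by
      intro t ht
      have h1 := huniform x₀ R₀ t le_rfl ht
      have h2 : R₀ * f R₀ / (μ (Metric.ball x₀ R₀)).toReal ≤ R₀ * f R₀ / α :=
        div_le_div_of_nonneg_left (by positivity) hα (Vlb R₀ hR₀)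
      have h3 : t * f t / (μ (Metric.ball x₀ t)).toReal ≤ K := by
        rw [hKdef]
        calc t * f t / (μ (Metric.ball x₀ t)).toReal
            ≤ γ * (R₀ * f R₀ / (μ (Metric.ball x₀ R₀)).toReal) := h1
          _ ≤ γ * (R₀ * f R₀ / α) := by
              exact mul_le_mul_of_nonneg_left h2 hγ.le
      have hVt : 0 < (μ (Metric.ball x₀ t)).toReal := Vpos t (hR₀.trans ht)
      have hft : 0 < f t := hf_pos t ht
      have h4 : t * f t ≤ K * (μ (Metric.ball x₀ t)).toReal := (div_le_iff₀ hVt).mp h3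
      rw [mul_one_div, div_le_div_iff₀ hVt hft]
      linarith
    -- integrability
    have Itail : ∀ r : ℝ, R₀ ≤ r →
        IntegrableOn (fun t => t / (μ (Metric.ball x₀ t)).toReal) (Set.Ioi r) := by
      intro r hr
      have hg : IntegrableOn (fun t => K * (1 / f t)) (Set.Ioi r) := (hint r hr).const_mul K
      refine Integrable.mono' hg ((measurable_id.div Vmeas).aestronglyMeasurable) ?_
      rw [ae_restrict_iff' measurableSet_Ioi]
      refine Filter.Eventually.of_forall fun t ht => ?_
      have ht' : R₀ ≤ t := hr.trans (le_of_lt ht)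
      have h0 : 0 ≤ t / (μ (Metric.ball x₀ t)).toReal :=
        div_nonneg (by linarith) (Vpos t (hR₀.trans ht')).le
      rw [Real.norm_eq_abs, abs_of_nonneg h0]
      exact hkey2 t ht'
    have Imid : ∀ d b : ℝ, 1 ≤ d →
        IntegrableOn (fun t => t / (μ (Metric.ball x₀ t)).toReal) (Set.Ioc d b) := by
      intro d b hd
      have hg : IntegrableOn (fun _ : ℝ => |b| / α) (Set.Ioc d b) :=
        integrableOn_const (by rw [Real.volume_Ioc]; exact ENNReal.ofReal_ne_top)
      refine Integrable.mono' hg ((measurable_id.div Vmeas).aestronglyMeasurable) ?_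
      rw [ae_restrict_iff' measurableSet_Ioc]
      refine Filter.Eventually.of_forall fun t ht => ?_
      have ht1 : 1 ≤ t := hd.trans ht.1.le
      have h0 : 0 ≤ t / (μ (Metric.ball x₀ t)).toReal :=
        div_nonneg (by linarith) (Vpos t ht1).le
      rw [Real.norm_eq_abs, abs_of_nonneg h0]
      exact div_le_div₀ (abs_nonneg b) (ht.2.trans (le_abs_self b)) hα (Vlb t ht1)
    -- integral bounds
    have A1 : ∀ r : ℝ, R₀ ≤ r →
        (∫ t in Set.Ioi r, t / (μ (Metric.ball x₀ t)).toReal) ≤ K * F r := by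
      intro r hr
      have hg : IntegrableOn (fun t => K * (1 / f t)) (Set.Ioi r) := (hint r hr).const_mul K
      calc (∫ t in Set.Ioi r, t / (μ (Metric.ball x₀ t)).toReal)
          ≤ ∫ t in Set.Ioi r, K * (1 / f t) :=
            setIntegral_mono_on (Itail r hr) hg measurableSet_Ioi
              (fun t ht => hkey2 t (hr.trans (le_of_lt ht)))
        _ = K * F r := by rw [integral_const_mul]
    have A2 : ∀ d : ℝ, 1 ≤ d →
        (∫ t in Set.Ioi d, t / (μ (Metric.ball x₀ t)).toReal) ≤ R₀ * R₀ / α + K * F R₀ := by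
      intro d hd
      by_cases hdR : R₀ ≤ d
      · have h1 := A1 d hdR
        have h2 : F d ≤ F R₀ := hFanti R₀ d le_rfl hdR
        have h3 : 0 ≤ R₀ * R₀ / α := by positivity
        nlinarith
      · push_neg at hdR
        have hsplit : Set.Ioi d = Set.Ioc d R₀ ∪ Set.Ioi R₀ :=
          (Set.Ioc_union_Ioi_eq_Ioi hdR.le).symm
        rw [hsplit, setIntegral_union (Set.Ioc_disjoint_Ioi le_rfl) measurableSet_Ioi
          (Imid d R₀ hd) (Itail R₀ le_rfl)]
        have hb1 : (∫ t in Set.Ioc d R₀, t / (μ (Metric.ball x₀ t)).toReal)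
            ≤ R₀ * R₀ / α := by
          have hg : IntegrableOn (fun _ : ℝ => R₀ / α) (Set.Ioc d R₀) :=
            integrableOn_const (by rw [Real.volume_Ioc]; exact ENNReal.ofReal_ne_top)
          calc (∫ t in Set.Ioc d R₀, t / (μ (Metric.ball x₀ t)).toReal)
              ≤ ∫ _ in Set.Ioc d R₀, R₀ / α :=
                setIntegral_mono_on (Imid d R₀ hd) hg measurableSet_Ioc (fun t ht =>
                  div_le_div₀ (by positivity) ht.2 hα (Vlb t (hd.trans ht.1.le)))
            _ = (R₀ - d) * (R₀ / α) := by
                rw [setIntegral_const, Real.volume_real_Ioc_of_le (by linarith), smul_eq_mul]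
            _ ≤ R₀ * (R₀ / α) := by
                apply mul_le_mul_of_nonneg_right (by linarith) (by positivity)
            _ = R₀ * R₀ / α := by ring
        have hb2 := A1 R₀ le_rfl
        linarith
    -- Green bounds
    have GB1 : ∀ x : M, x ∈ (Metric.ball x₀ 1)ᶜ → G x x₀ ≤ Gmax := by
      intro x hx
      have hd1 : 1 ≤ dist x x₀ := by
        by_contra h
        exact hx (Metric.mem_ball.mpr (by linarith))
      have hne : x ≠ x₀ := by
        intro h; rw [h, dist_self] at hd1; linarith
      calc G x x₀ ≤ c₂ * ∫ t in Set.Ioi (dist x x₀), t / (μ (Metric.ball x₀ t)).toReal :=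
            hGreen_up x x₀ hne
        _ ≤ Gmax := by
            rw [hGmaxdef]
            exact mul_le_mul_of_nonneg_left (A2 (dist x x₀) hd1) hc₂.le
    have GB2 : ∀ (j : ℕ) (x : M), D j / 2 ≤ dist (o j) x₀ → x ∈ Metric.ball (o j) 1 →
        x ∈ (Metric.ball x₀ 1)ᶜ → G x x₀ ≤ c₂ * (K * (2⁻¹ : ℝ) ^ j) := by
      intro j x hj hxj hx
      have hd1 : 1 ≤ dist x x₀ := by
        by_contra h
        exact hx (Metric.mem_ball.mpr (by linarith))
      have hne : x ≠ x₀ := by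
        intro h; rw [h, dist_self] at hd1; linarith
      have htri : dist (o j) x₀ ≤ dist (o j) x + dist x x₀ := dist_triangle _ _ _
      have hojx : dist (o j) x < 1 := by rw [dist_comm]; exact Metric.mem_ball.mp hxj
      have hsj : s j ≤ dist x x₀ := by
        have := hDs j
        linarith
      have hRd : R₀ ≤ dist x x₀ := (hsR j).trans hsj
      calc G x x₀ ≤ c₂ * ∫ t in Set.Ioi (dist x x₀), t / (μ (Metric.ball x₀ t)).toReal :=
            hGreen_up x x₀ hne
        _ ≤ c₂ * (K * F (dist x x₀)) :=
            mul_le_mul_of_nonneg_left (A1 (dist x x₀) hRd) hc₂.le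
        _ ≤ c₂ * (K * F (s j)) := by
            exact mul_le_mul_of_nonneg_left
              (mul_le_mul_of_nonneg_left (hFanti (s j) (dist x x₀) (hsR j) hsj) hK0) hc₂.le
        _ ≤ c₂ * (K * (2⁻¹ : ℝ) ^ j) :=
            mul_le_mul_of_nonneg_left (mul_le_mul_of_nonneg_left (hsF j) hK0) hc₂.le
    -- uniqueness of close index
    have hEuniq : ∀ j k : ℕ, dist (o j) x₀ < D j / 2 → dist (o k) x₀ < D k / 2 → j = k := by
      intro j k hj hk
      by_contra hne
      have h1 := sep' j k hne
      have h2 : dist (o j) (o k) ≤ dist (o j) x₀ + dist (o k) x₀ := by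
        have := dist_triangle (o j) x₀ (o k)
        rw [dist_comm x₀ (o k)] at this
        exact this
      have h3 : D j ≤ D (max j k) := hDmono (le_max_left j k)
      have h4 : D k ≤ D (max j k) := hDmono (le_max_right j k)
      have h5 : D j / 2 + D k / 2 ≤ D (max j k) := by
        rcases max_choice j k with h | h <;> rw [h] at h3 h4 ⊢ <;> linarith
      linarith
    -- empty intersections for far balls
    have hempty : ∀ j : ℕ, D j / 2 ≤ dist (o j) x₀ →
        Metric.ball (o j) 1 ∩ Metric.ball x₀ 1 = ∅ := by
      intro j hj
      rw [Set.eq_empty_iff_forall_notMem]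
      rintro x ⟨h1, h2⟩
      have h3 : dist (o j) x < 1 := by rw [dist_comm]; exact Metric.mem_ball.mp h1
      have h4 : dist x x₀ < 1 := Metric.mem_ball.mp h2
      have h5 := dist_triangle (o j) x x₀
      have h6 := hD4 j
      linarith
    -- Term 1
    have T1 : (∫⁻ x in Metric.ball x₀ 1, ENNReal.ofReal ((w x).toReal) ∂μ) ≤ 1 := by
      have hvw : ∀ x, ENNReal.ofReal ((w x).toReal) = w x :=
        fun x => ENNReal.ofReal_toReal (hwfin x)
      rw [lintegral_congr hvw, hwdef]
      simp only []
      rw [lintegral_tsum fun j =>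
        (measurable_const.indicator measurableSet_ball).aemeasurable]
      have hterm : ∀ j : ℕ, (∫⁻ x in Metric.ball x₀ 1, (Metric.ball (o j) 1).indicator
          (fun _ => ENNReal.ofReal (a j)) x ∂μ)
          = ENNReal.ofReal (a j) * μ (Metric.ball (o j) 1 ∩ Metric.ball x₀ 1) := by
        intro j
        rw [lintegral_indicator measurableSet_ball, setLIntegral_const,
          Measure.restrict_apply measurableSet_ball]
      rw [tsum_congr hterm]
      by_cases hE : ∃ j, dist (o j) x₀ < D j / 2
      · obtain ⟨j₀, hj₀⟩ := hE
        calc (∑' j, ENNReal.ofReal (a j) * μ (Metric.ball (o j) 1 ∩ Metric.ball x₀ 1))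
            ≤ ∑' j, if j = j₀ then 1 else 0 := by
              refine ENNReal.tsum_le_tsum fun j => ?_
              by_cases hjj : j = j₀
              · rw [if_pos hjj]
                calc ENNReal.ofReal (a j) * μ (Metric.ball (o j) 1 ∩ Metric.ball x₀ 1)
                    ≤ ENNReal.ofReal (a j) * μ (Metric.ball (o j) 1) :=
                      mul_le_mul_right (measure_mono Set.inter_subset_left) _
                  _ = 1 := hkey j
              · rw [if_neg hjj]
                have hfar : D j / 2 ≤ dist (o j) x₀ := by
                  by_contra h
                  push_neg at h
                  exact hjj (hEuniq j j₀ h hj₀)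
                rw [hempty j hfar]
                simp
          _ = 1 := tsum_ite_eq j₀ 1
      · push_neg at hE
        have : ∀ j : ℕ, ENNReal.ofReal (a j) * μ (Metric.ball (o j) 1 ∩ Metric.ball x₀ 1)
            = 0 := by
          intro j
          rw [hempty j (hE j)]
          simp
        rw [tsum_congr this]
        simp
    -- Term 2
    set bnd : ℕ → ℝ := fun j =>
      if dist (o j) x₀ < D j / 2 then Gmax else c₂ * (K * (2⁻¹ : ℝ) ^ j) with hbnddef
    have hbnd_nn : ∀ j, 0 ≤ bnd j := by
      intro j
      rw [hbnddef]
      simp only []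
      split
      · exact hGmax0
      · positivity
    set h : M → ℝ≥0∞ := fun x =>
      ∑' j, (Metric.ball (o j) 1).indicator (fun _ => ENNReal.ofReal (a j * bnd j)) x with hhdef
    have hh_meas : Measurable h :=
      Measurable.ennreal_tsum fun j => measurable_const.indicator measurableSet_ball
    have T2 : (∫⁻ x in (Metric.ball x₀ 1)ᶜ, ENNReal.ofReal ((w x).toReal * G x x₀) ∂μ)
        ≤ ENNReal.ofReal Gmax + ENNReal.ofReal (c₂ * K) * S := by
      have step1 : (∫⁻ x in (Metric.ball x₀ 1)ᶜ, ENNReal.ofReal ((w x).toReal * G x x₀) ∂μ)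
          ≤ ∫⁻ x in (Metric.ball x₀ 1)ᶜ, h x ∂μ := by
        refine setLIntegral_mono hh_meas fun x hx => ?_
        by_cases hxb : ∃ j, x ∈ Metric.ball (o j) 1
        · obtain ⟨j, hj⟩ := hxb
          have hv : (w x).toReal = a j := by
            rw [hwx j x hj, ENNReal.toReal_ofReal (ha_nn j)]
          have hGle : G x x₀ ≤ bnd j := by
            rw [hbnddef]
            simp only []
            split
            · exact GB1 x hx
            · next hfar =>
                push_neg at hfar
                exact GB2 j x hfar hj hx
          calc ENNReal.ofReal ((w x).toReal * G x x₀)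
              ≤ ENNReal.ofReal (a j * bnd j) := by
                rw [hv]
                exact ENNReal.ofReal_le_ofReal (mul_le_mul_of_nonneg_left hGle (ha_nn j))
            _ ≤ h x := by
                rw [hhdef]
                simp only []
                have := ENNReal.le_tsum (f := fun j => (Metric.ball (o j) 1).indicator
                  (fun _ => ENNReal.ofReal (a j * bnd j)) x) j
                rwa [Set.indicator_of_mem hj] at this
        · push_neg at hxb
          have : (w x).toReal = 0 := by rw [hw0 x hxb]; simp
          rw [this, zero_mul]
          simp
      have step2 : (∫⁻ x in (Metric.ball x₀ 1)ᶜ, h x ∂μ) ≤ ∫⁻ x, h x ∂μ :=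
        setLIntegral_le_lintegral _ _
      have step3 : (∫⁻ x, h x ∂μ) = ∑' j, ENNReal.ofReal (bnd j) := by
        rw [hhdef]
        simp only []
        rw [lintegral_tsum fun j =>
          (measurable_const.indicator measurableSet_ball).aemeasurable]
        refine tsum_congr fun j => ?_
        rw [lintegral_indicator measurableSet_ball, setLIntegral_const,
          ENNReal.ofReal_mul (ha_nn j), mul_comm (ENNReal.ofReal (a j)) _, mul_assoc,
          hkey j, mul_one]
      have step4 : (∑' j, ENNReal.ofReal (bnd j))
          ≤ ENNReal.ofReal Gmax + ENNReal.ofReal (c₂ * K) * S := by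
        have hgeo : ∀ j : ℕ, ENNReal.ofReal (c₂ * (K * (2⁻¹ : ℝ) ^ j))
            = ENNReal.ofReal (c₂ * K) * ((2 : ℝ≥0∞)⁻¹) ^ j := by
          intro j
          have h1 : c₂ * (K * (2⁻¹ : ℝ) ^ j) = (c₂ * K) * (2⁻¹ : ℝ) ^ j := by ring
          rw [h1, ENNReal.ofReal_mul (by positivity), ENNReal.ofReal_pow (by norm_num)]
          congr 2
          rw [ENNReal.ofReal_inv_of_pos (by norm_num)]
          norm_num
        by_cases hE : ∃ j, dist (o j) x₀ < D j / 2
        · obtain ⟨j₀, hj₀⟩ := hE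
          calc (∑' j, ENNReal.ofReal (bnd j))
              ≤ ∑' j, ((if j = j₀ then ENNReal.ofReal Gmax else 0)
                  + ENNReal.ofReal (c₂ * K) * ((2 : ℝ≥0∞)⁻¹) ^ j) := by
                refine ENNReal.tsum_le_tsum fun j => ?_
                by_cases hjj : j = j₀
                · rw [if_pos hjj, hbnddef]
                  simp only []
                  subst hjj
                  rw [if_pos hj₀]
                  exact le_add_right le_rfl
                · rw [if_neg hjj, hbnddef]
                  simp only []
                  have hfar : ¬ dist (o j) x₀ < D j / 2 := by
                    intro h'
                    exact hjj (hEuniq j j₀ h' hj₀)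
                  rw [if_neg hfar, hgeo j]
                  exact le_add_left le_rfl
            _ = ENNReal.ofReal Gmax + ENNReal.ofReal (c₂ * K) * S := by
                rw [ENNReal.tsum_add, tsum_ite_eq j₀ (fun _ => ENNReal.ofReal Gmax),
                  ENNReal.tsum_mul_left, hSdef]
        · push_neg at hE
          have : ∀ j : ℕ, ENNReal.ofReal (bnd j)
              = ENNReal.ofReal (c₂ * K) * ((2 : ℝ≥0∞)⁻¹) ^ j := by
            intro j
            rw [hbnddef]
            simp only []
            rw [if_neg (not_lt.mpr (hE j)), hgeo j]
          rw [tsum_congr this, ENNReal.tsum_mul_left, ← hSdef]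
          exact le_add_self
      exact le_trans step1 (le_trans step2 (step3.le.trans step4))
    calc (∫⁻ x in Metric.ball x₀ 1, ENNReal.ofReal ((w x).toReal) ∂μ)
          + (∫⁻ x in (Metric.ball x₀ 1)ᶜ, ENNReal.ofReal ((w x).toReal * G x x₀) ∂μ)
        ≤ 1 + (ENNReal.ofReal Gmax + ENNReal.ofReal (c₂ * K) * S) := add_le_add T1 T2
      _ = 1 + ENNReal.ofReal Gmax + ENNReal.ofReal (c₂ * K) * S := by rw [add_assoc]
end

section
/- Under the additional two-sided polynomial volume bound κ₁R^α ≤ Vol(B_R(x₀)) ≤ κ₂R^α (R ≥ 1, 2 < α ≤ n), any measurable u ≥ 0 with u(x) ≍ (1 + d(x,o))^{−a} belongs to L¹_G(M) if and only if a > 2; in particular sup_{x₀} [∫_{B_1(x₀)} u dμ + ∫_{M∖B_1(x₀)} u G(·,x₀) dμ] < ∞ whenever a > 2. -/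
open MeasureTheory Set ENNReal


lemma green_int_bounds {M : Type*} [MetricSpace M] [MeasurableSpace M]
    (μ : MeasureTheory.Measure M) (κ₁ κ₂ α : ℝ) (hκ₁ : 0 < κ₁) (hκ₂ : 0 < κ₂) (hα₂ : 2 < α)
    (x₀ : M)
    (hVol : ∀ R : ℝ, 1 ≤ R → κ₁ * R ^ α ≤ (μ (Metric.ball x₀ R)).toReal ∧
        (μ (Metric.ball x₀ R)).toReal ≤ κ₂ * R ^ α)
    (hVol_fin : ∀ R : ℝ, μ (Metric.ball x₀ R) ≠ ⊤)
    {d : ℝ} (hd : 1 ≤ d) :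
    d ^ (2-α) / (κ₂ * (α-2)) ≤ (∫ t in Set.Ioi d, t / (μ (Metric.ball x₀ t)).toReal)
    ∧ (∫ t in Set.Ioi d, t / (μ (Metric.ball x₀ t)).toReal) ≤ d ^ (2-α) / (κ₁ * (α-2)) := by
  have hd0 : (0:ℝ) < d := lt_of_lt_of_le one_pos hd
  set V : ℝ → ℝ := fun t => (μ (Metric.ball x₀ t)).toReal with hV
  have hVmono : Monotone V := fun s t hst =>
    ENNReal.toReal_mono (hVol_fin t) (measure_mono (Metric.ball_subset_ball hst))
  have hVmeas : Measurable V := hVmono.measurable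
  have hfmeas : Measurable fun t => t / V t := measurable_id.div hVmeas
  have hpt : ∀ t ∈ Set.Ioi d, κ₂⁻¹ * t ^ (1-α) ≤ t / V t ∧ t / V t ≤ κ₁⁻¹ * t ^ (1-α) := by
    intro t ht
    have ht1 : (1:ℝ) ≤ t := hd.trans (le_of_lt ht)
    have ht0 : (0:ℝ) < t := lt_of_lt_of_le one_pos ht1
    have htα : (0:ℝ) < t ^ α := Real.rpow_pos_of_pos ht0 α
    have hVl : κ₁ * t ^ α ≤ V t := (hVol t ht1).1
    have hVu : V t ≤ κ₂ * t ^ α := (hVol t ht1).2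
    have hVpos : 0 < V t := lt_of_lt_of_le (by positivity) hVl
    have h1 : t / V t ≤ t / (κ₁ * t ^ α) :=
      div_le_div_of_nonneg_left ht0.le (by positivity) hVl
    have h2 : t / (κ₂ * t ^ α) ≤ t / V t :=
      div_le_div_of_nonneg_left ht0.le hVpos hVu
    have he : ∀ κ : ℝ, 0 < κ → t / (κ * t ^ α) = κ⁻¹ * t ^ (1-α) := by
      intro κ hκ
      rw [Real.rpow_sub ht0, Real.rpow_one]
      field_simp
    constructor
    · rw [← he κ₂ hκ₂]; exact h2
    · rw [he κ₁ hκ₁] at h1; exact h1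
  have hrint : IntegrableOn (fun t => t ^ (1-α)) (Set.Ioi d) :=
    integrableOn_Ioi_rpow_of_lt (by linarith) hd0
  have hgint : IntegrableOn (fun t => κ₁⁻¹ * t ^ (1-α)) (Set.Ioi d) := hrint.const_mul _
  have hgint₂ : IntegrableOn (fun t => κ₂⁻¹ * t ^ (1-α)) (Set.Ioi d) := hrint.const_mul _
  have hfint : IntegrableOn (fun t => t / V t) (Set.Ioi d) := by
    refine Integrable.mono' hgint (hfmeas.aestronglyMeasurable) ?_
    filter_upwards [ae_restrict_mem measurableSet_Ioi] with t ht
    have ht1 : (1:ℝ) ≤ t := hd.trans (le_of_lt ht)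
    have ht0 : (0:ℝ) < t := lt_of_lt_of_le one_pos ht1
    have hVpos : 0 < V t := lt_of_lt_of_le (by positivity) (hVol t ht1).1
    rw [Real.norm_eq_abs, abs_of_nonneg (by positivity)]
    exact (hpt t ht).2
  have hint_rpow : (∫ t in Set.Ioi d, t ^ (1-α)) = d ^ (2-α) / (α-2) := by
    rw [integral_Ioi_rpow_of_lt (by linarith) hd0]
    have : (1-α) + 1 = 2-α := by ring
    rw [this, div_eq_div_iff (by linarith) (by linarith)]
    ring
  constructor
  · calc d ^ (2-α) / (κ₂ * (α-2)) = ∫ t in Set.Ioi d, κ₂⁻¹ * t ^ (1-α) := by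
          rw [integral_const_mul, hint_rpow]
          field_simp
      _ ≤ _ := setIntegral_mono_on hgint₂ hfint measurableSet_Ioi fun t ht => (hpt t ht).1
  · calc (∫ t in Set.Ioi d, t / V t) ≤ ∫ t in Set.Ioi d, κ₁⁻¹ * t ^ (1-α) :=
          setIntegral_mono_on hfint hgint measurableSet_Ioi fun t ht => (hpt t ht).2
      _ = d ^ (2-α) / (κ₁ * (α-2)) := by
          rw [integral_const_mul, hint_rpow]
          field_simp


lemma tail_lintegral_le {M : Type*} [MetricSpace M] [MeasurableSpace M] [OpensMeasurableSpace M]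
    (μ : MeasureTheory.Measure M) (κ₂ α β : ℝ) (hκ₂ : 0 < κ₂) (hα : 0 < α) (hβ : α < β)
    (hVol : ∀ (y : M) (R : ℝ), 1 ≤ R → (μ (Metric.ball y R)).toReal ≤ κ₂ * R ^ α)
    (hVol_fin : ∀ (y : M) (R : ℝ), μ (Metric.ball y R) ≠ ⊤)
    (y : M) :
    ∫⁻ x in (Metric.ball y 1)ᶜ, ENNReal.ofReal ((dist x y) ^ (-β)) ∂μ ≤
      ENNReal.ofReal (κ₂ * 2 ^ α) * (1 - ENNReal.ofReal ((2:ℝ) ^ (α - β)))⁻¹ := by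
  classical
  set S : ℕ → Set M := fun k => Metric.ball y ((2:ℝ) ^ (k+1)) \ Metric.ball y ((2:ℝ) ^ k)
    with hS
  have hScover : (Metric.ball y 1)ᶜ ⊆ ⋃ k, S k := by
    intro x hx
    have hx1 : (1:ℝ) ≤ dist x y := by
      simp only [mem_compl_iff, Metric.mem_ball, not_lt] at hx; exact hx
    have hex : ∃ n : ℕ, dist x y < 2 ^ n := pow_unbounded_of_one_lt _ one_lt_two
    have hn : dist x y < 2 ^ (Nat.find hex) := Nat.find_spec hex
    have hn0 : Nat.find hex ≠ 0 := by
      intro h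
      rw [h] at hn
      norm_num at hn
      linarith
    obtain ⟨k, hk'⟩ := Nat.exists_eq_succ_of_ne_zero hn0
    have hk : ¬ dist x y < 2 ^ k := Nat.find_min hex (by omega)
    refine mem_iUnion.2 ⟨k, Metric.mem_ball.2 ?_, fun h => hk (Metric.mem_ball.1 h)⟩
    rw [← Nat.succ_eq_add_one, ← hk']; exact hn
  have hSmeas : ∀ k, MeasurableSet (S k) :=
    fun k => (Metric.isOpen_ball.measurableSet).diff Metric.isOpen_ball.measurableSet
  have hkey : ∀ k : ℕ, ∫⁻ x in S k, ENNReal.ofReal ((dist x y) ^ (-β)) ∂μ ≤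
      ENNReal.ofReal (κ₂ * 2 ^ α) * ENNReal.ofReal ((2:ℝ) ^ (α - β)) ^ k := by
    intro k
    have h2k : (1:ℝ) ≤ 2 ^ k := one_le_pow₀ (by norm_num)
    have h2k1 : (1:ℝ) ≤ 2 ^ (k+1) := one_le_pow₀ (by norm_num)
    have hstep : ∫⁻ x in S k, ENNReal.ofReal ((dist x y) ^ (-β)) ∂μ ≤
        ENNReal.ofReal (((2:ℝ) ^ k) ^ (-β)) * μ (S k) := by
      rw [← setLIntegral_const]
      refine setLIntegral_mono' (hSmeas k) fun x hx => ?_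
      refine ENNReal.ofReal_le_ofReal ?_
      refine Real.rpow_le_rpow_of_nonpos (by linarith) ?_ (by linarith)
      have := hx.2
      simpa [Metric.mem_ball, not_lt] using this
    refine hstep.trans ?_
    have hμS : μ (S k) ≤ ENNReal.ofReal (κ₂ * ((2:ℝ) ^ (k+1)) ^ α) := by
      refine le_trans (measure_mono (diff_subset)) ?_
      rw [ENNReal.le_ofReal_iff_toReal_le (hVol_fin y _) (by positivity)]
      exact hVol y _ h2k1
    refine le_trans (mul_le_mul_right hμS _) ?_
    rw [← ENNReal.ofReal_pow (by positivity), ← ENNReal.ofReal_mul (by positivity),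
      ← ENNReal.ofReal_mul (by positivity)]
    refine ENNReal.ofReal_le_ofReal (le_of_eq ?_)
    have e1 : ((2:ℝ) ^ k) ^ (-β) = (2:ℝ) ^ ((k:ℝ) * (-β)) := by
      rw [← Real.rpow_natCast 2 k, ← Real.rpow_mul (by norm_num)]
    have e2 : ((2:ℝ) ^ (k+1)) ^ α = (2:ℝ) ^ (((k:ℝ)+1) * α) := by
      rw [← Real.rpow_natCast 2 (k+1), ← Real.rpow_mul (by norm_num)]
      push_cast; ring_nf
    have e3 : ((2:ℝ) ^ (α-β)) ^ k = (2:ℝ) ^ ((α-β) * (k:ℝ)) := by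
      rw [← Real.rpow_natCast ((2:ℝ) ^ (α-β)) k, ← Real.rpow_mul (by norm_num)]
    rw [e1, e2, e3]
    rw [show (2:ℝ)^((k:ℝ)*(-β)) * (κ₂ * (2:ℝ)^(((k:ℝ)+1)*α)) =
        κ₂ * ((2:ℝ)^((k:ℝ)*(-β)) * (2:ℝ)^(((k:ℝ)+1)*α)) from by ring,
      ← Real.rpow_add (by norm_num : (0:ℝ) < 2),
      show κ₂ * (2:ℝ)^α * (2:ℝ)^((α-β)*(k:ℝ)) = κ₂ * ((2:ℝ)^α * (2:ℝ)^((α-β)*(k:ℝ))) from by ring,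
      ← Real.rpow_add (by norm_num : (0:ℝ) < 2)]
    ring_nf
  calc ∫⁻ x in (Metric.ball y 1)ᶜ, ENNReal.ofReal ((dist x y) ^ (-β)) ∂μ
      ≤ ∫⁻ x in ⋃ k, S k, ENNReal.ofReal ((dist x y) ^ (-β)) ∂μ :=
        lintegral_mono' (Measure.restrict_mono hScover le_rfl) le_rfl
    _ ≤ ∑' k, ∫⁻ x in S k, ENNReal.ofReal ((dist x y) ^ (-β)) ∂μ := lintegral_iUnion_le _ _
    _ ≤ ∑' k : ℕ, ENNReal.ofReal (κ₂ * 2 ^ α) * ENNReal.ofReal ((2:ℝ) ^ (α - β)) ^ k :=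
        ENNReal.tsum_le_tsum hkey
    _ = ENNReal.ofReal (κ₂ * 2 ^ α) * (1 - ENNReal.ofReal ((2:ℝ) ^ (α - β)))⁻¹ := by
        rw [ENNReal.tsum_mul_left, ENNReal.tsum_geometric]


lemma diverge_lintegral {M : Type*} [MetricSpace M] [MeasurableSpace M] [OpensMeasurableSpace M]
    (μ : MeasureTheory.Measure M) (κ₁ κ₂ α : ℝ) (hκ₁ : 0 < κ₁) (hκ₂ : 0 < κ₂) (hα : 0 < α)
    (o : M)
    (hVol : ∀ R : ℝ, 1 ≤ R → κ₁ * R ^ α ≤ (μ (Metric.ball o R)).toReal ∧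
        (μ (Metric.ball o R)).toReal ≤ κ₂ * R ^ α)
    (hVol_fin : ∀ R : ℝ, μ (Metric.ball o R) ≠ ⊤)
    (C : ℝ) (hC : 0 < C) (f : M → ℝ≥0∞)
    (hf : ∀ x : M, 1 ≤ dist x o → ENNReal.ofReal (C * (dist x o) ^ (-α)) ≤ f x) :
    ∫⁻ x in (Metric.ball o 1)ᶜ, f x ∂μ = ⊤ := by
  have hκ12 : κ₁ ≤ κ₂ := by
    have h := hVol 1 le_rfl
    rw [Real.one_rpow, mul_one, mul_one] at h
    exact h.1.trans h.2
  have hbase : (1:ℝ) < 2 * κ₂ / κ₁ := by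
    rw [lt_div_iff₀ hκ₁]; nlinarith
  have hbase0 : (0:ℝ) < 2 * κ₂ / κ₁ := by linarith
  set lam : ℝ := (2 * κ₂ / κ₁) ^ (α⁻¹ : ℝ) with hlam
  have hlam1 : 1 < lam := Real.one_lt_rpow_iff_of_pos hbase0 |>.2 (Or.inl ⟨hbase, by positivity⟩)
  have hlam0 : (0:ℝ) < lam := lt_trans one_pos hlam1
  have hlamα : lam ^ α = 2 * κ₂ / κ₁ := by
    rw [hlam, ← Real.rpow_mul hbase0.le, inv_mul_cancel₀ hα.ne', Real.rpow_one]
  set r : ℕ → ℝ := fun j => lam ^ j with hr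
  have hr1 : ∀ j, (1:ℝ) ≤ r j := fun j => one_le_pow₀ hlam1.le
  have hr0 : ∀ j, (0:ℝ) < r j := fun j => lt_of_lt_of_le one_pos (hr1 j)
  set S : ℕ → Set M := fun j => Metric.ball o (r (j+1)) \ Metric.ball o (r j) with hS
  have hSmeas : ∀ j, MeasurableSet (S j) :=
    fun j => Metric.isOpen_ball.measurableSet.diff Metric.isOpen_ball.measurableSet
  have hdisj0 : ∀ i j, i < j → Disjoint (S i) (S j) := by
    intro i j h
    refine Set.disjoint_left.2 fun x hxi hxj => ?_
    exact hxj.2 (Metric.mem_ball.2 (lt_of_lt_of_le (Metric.mem_ball.1 hxi.1)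
      (pow_le_pow_right₀ hlam1.le h)))
  have hdisj : Pairwise (Function.onFun Disjoint S) := fun i j hij => by
    rcases lt_or_gt_of_ne hij with h | h
    · exact hdisj0 i j h
    · exact (hdisj0 j i h).symm
  have hsub : (⋃ j, S j) ⊆ (Metric.ball o 1)ᶜ := by
    rintro x ⟨_, ⟨j, rfl⟩, hx⟩
    intro hx1
    exact hx.2 (Metric.mem_ball.2 (lt_of_lt_of_le (Metric.mem_ball.1 hx1) (hr1 j)))
  have hrpowα : ∀ j, (r (j+1)) ^ α = lam ^ α * (r j) ^ α := by
    intro j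
    show (lam ^ (j+1) : ℝ) ^ α = lam ^ α * (lam ^ j) ^ α
    rw [pow_succ, mul_comm (lam ^ j) lam,
      Real.mul_rpow hlam0.le (pow_nonneg hlam0.le j)]
  have hμS : ∀ j, ENNReal.ofReal (κ₂ * (r j) ^ α) ≤ μ (S j) := by
    intro j
    have hsub' : Metric.ball o (r j) ⊆ Metric.ball o (r (j+1)) :=
      Metric.ball_subset_ball (pow_le_pow_right₀ hlam1.le (by omega))
    have hdiff : μ (S j) = μ (Metric.ball o (r (j+1))) - μ (Metric.ball o (r j)) :=
      measure_diff hsub' Metric.isOpen_ball.measurableSet.nullMeasurableSet (hVol_fin _)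
    refine ENNReal.ofReal_le_of_le_toReal ?_
    rw [hdiff, ENNReal.toReal_sub_of_le (measure_mono hsub') (hVol_fin _)]
    have h1 := (hVol (r (j+1)) (hr1 _)).1
    have h2 := (hVol (r j) (hr1 _)).2
    have : κ₁ * (r (j+1)) ^ α = 2 * κ₂ * (r j) ^ α := by
      rw [hrpowα j, hlamα]; field_simp
    nlinarith [Real.rpow_pos_of_pos (hr0 j) α]
  set c0 : ℝ≥0∞ := ENNReal.ofReal (C * κ₁ / 2) with hc0
  have hc0ne : c0 ≠ 0 := by
    rw [hc0, ← ENNReal.ofReal_zero, Ne, ENNReal.ofReal_eq_ofReal_iff (by positivity) le_rfl]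
    positivity
  have hint : ∀ j, c0 ≤ ∫⁻ x in S j, f x ∂μ := by
    intro j
    have key : ∀ x ∈ S j, ENNReal.ofReal (C * (r (j+1)) ^ (-α)) ≤ f x := by
      intro x hx
      have hd1 : (1:ℝ) ≤ dist x o := by
        have := hx.2
        rw [Metric.mem_ball, not_lt] at this
        exact (hr1 j).trans this
      refine le_trans (ENNReal.ofReal_le_ofReal ?_) (hf x hd1)
      refine mul_le_mul_of_nonneg_left ?_ hC.le
      exact Real.rpow_le_rpow_of_nonpos (by linarith) (le_of_lt (Metric.mem_ball.1 hx.1))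
        (by linarith)
    have hrn : (0:ℝ) ≤ (r (j+1)) ^ (-α) := Real.rpow_nonneg (hr0 _).le _
    have hx : (0:ℝ) < (r j) ^ α := Real.rpow_pos_of_pos (hr0 j) α
    calc c0 = ENNReal.ofReal (C * (r (j+1)) ^ (-α)) * ENNReal.ofReal (κ₂ * (r j) ^ α) := by
          rw [hc0, ← ENNReal.ofReal_mul (mul_nonneg hC.le hrn)]
          congr 1
          rw [Real.rpow_neg (hr0 _).le, hrpowα j, hlamα]
          field_simp
      _ ≤ ENNReal.ofReal (C * (r (j+1)) ^ (-α)) * μ (S j) := mul_le_mul_right (hμS j) _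
      _ = ∫⁻ _ in S j, ENNReal.ofReal (C * (r (j+1)) ^ (-α)) ∂μ := (setLIntegral_const _ _).symm
      _ ≤ ∫⁻ x in S j, f x ∂μ := setLIntegral_mono' (hSmeas j) key
  refine top_le_iff.1 ?_
  calc (⊤:ℝ≥0∞) = ∑' _ : ℕ, c0 := (ENNReal.tsum_const_eq_top_of_ne_zero hc0ne).symm
    _ ≤ ∑' j, ∫⁻ x in S j, f x ∂μ := ENNReal.tsum_le_tsum hint
    _ = ∫⁻ x in ⋃ j, S j, f x ∂μ := (lintegral_iUnion hSmeas hdisj f).symm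
    _ ≤ ∫⁻ x in (Metric.ball o 1)ᶜ, f x ∂μ :=
        lintegral_mono' (Measure.restrict_mono hsub le_rfl) le_rfl


set_option maxHeartbeats 1000000 in
/-- under the two-sided polynomial volume bound `κ₁R^α ≤ Vol(B_R(x₀)) ≤ κ₂R^α`
(`R ≥ 1`, `2 < α ≤ n`) and the two-sided Li–Yau Green bounds, a measurable `u ≥ 0` with
`u ≍ (1+d(x,o))^{−a}` belongs to `L¹_G(M)` (i.e. has finite uniform weighted norm
`sup_{x₀}[∫_{B_1(x₀)} u dμ + ∫_{M∖B_1(x₀)} u G(·,x₀) dμ]`) if and only if `a > 2`. -/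
theorem stmt_12 {M : Type*} [MetricSpace M] [MeasurableSpace M] [BorelSpace M]
    (μ : MeasureTheory.Measure M) (G : M → M → ℝ)
    (n : ℕ) (hn : 3 ≤ n) (c₁ c₂ κ₁ κ₂ α a : ℝ)
    (hc₁ : 0 < c₁) (hc₂ : 0 < c₂) (hκ₁ : 0 < κ₁) (hκ₂ : 0 < κ₂)
    (hα₂ : 2 < α) (hαn : α ≤ n) (ha : 0 < a)
    (hG_nonneg : ∀ x x₀ : M, 0 ≤ G x x₀)
    (hVol : ∀ (x₀ : M) (R : ℝ), 1 ≤ R →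
      κ₁ * R ^ α ≤ (μ (Metric.ball x₀ R)).toReal ∧
        (μ (Metric.ball x₀ R)).toReal ≤ κ₂ * R ^ α)
    (hVol_fin : ∀ (x₀ : M) (R : ℝ), μ (Metric.ball x₀ R) ≠ ⊤)
    (hV_pos : ∀ (x : M) (r : ℝ), 0 < r → 0 < (μ (Metric.ball x r)).toReal)
    (hGreen_low : ∀ x x₀ : M, x ≠ x₀ →
      c₁ * (∫ t in Set.Ioi (dist x x₀), t / (μ (Metric.ball x₀ t)).toReal) ≤ G x x₀)
    (hGreen_up : ∀ x x₀ : M, x ≠ x₀ →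
      G x x₀ ≤ c₂ * ∫ t in Set.Ioi (dist x x₀), t / (μ (Metric.ball x₀ t)).toReal)
    (o : M) (u : M → ℝ) (hu_meas : Measurable u) (hu_nonneg : ∀ x, 0 ≤ u x)
    (k₁ k₂ : ℝ) (hk₁ : 0 < k₁) (hk₂ : 0 < k₂)
    (hu_low : ∀ x : M, k₁ * (1 + dist x o) ^ (-a) ≤ u x)
    (hu_up : ∀ x : M, u x ≤ k₂ * (1 + dist x o) ^ (-a)) :
    (⨆ x₀ : M, (∫⁻ x in Metric.ball x₀ 1, ENNReal.ofReal (u x) ∂μ) +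
        ∫⁻ x in (Metric.ball x₀ 1)ᶜ, ENNReal.ofReal (u x * G x x₀) ∂μ) < ⊤ ↔
      2 < a := by
  constructor
  · -- finiteness of the sup forces `2 < a`
    intro hfin
    by_contra hcon
    push_neg at hcon
    have hα2 : (0:ℝ) < α - 2 := by linarith
    have hterm : (∫⁻ x in Metric.ball o 1, ENNReal.ofReal (u x) ∂μ) +
        (∫⁻ x in (Metric.ball o 1)ᶜ, ENNReal.ofReal (u x * G x o) ∂μ) < ⊤ :=
      lt_of_le_of_lt (le_iSup (fun x₀ => (∫⁻ x in Metric.ball x₀ 1, ENNReal.ofReal (u x) ∂μ) +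
        ∫⁻ x in (Metric.ball x₀ 1)ᶜ, ENNReal.ofReal (u x * G x x₀) ∂μ) o) hfin
    have hterm2 : (∫⁻ x in (Metric.ball o 1)ᶜ, ENNReal.ofReal (u x * G x o) ∂μ) < ⊤ :=
      lt_of_le_of_lt le_add_self hterm
    have hC : 0 < k₁ * c₁ / (4 * (κ₂ * (α - 2))) := by positivity
    have happ : ∀ x : M, 1 ≤ dist x o →
        ENNReal.ofReal (k₁ * c₁ / (4 * (κ₂ * (α - 2))) * (dist x o) ^ (-α)) ≤
          ENNReal.ofReal (u x * G x o) := by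
      intro x hd1
      have hd0 : (0:ℝ) < dist x o := lt_of_lt_of_le one_pos hd1
      have hxo : x ≠ o := by
        intro h; rw [h, dist_self] at hd1; linarith
      have h2d : (1:ℝ) ≤ 2 * dist x o := by linarith
      have h1 : k₁ * (1/4 * (dist x o) ^ (-2:ℝ)) ≤ u x := by
        refine le_trans ?_ (hu_low x)
        refine mul_le_mul_of_nonneg_left ?_ hk₁.le
        have e1 : (2 * dist x o) ^ (-2:ℝ) = 1/4 * (dist x o) ^ (-2:ℝ) := by
          rw [Real.mul_rpow (by norm_num) hd0.le,
            show ((-2:ℝ)) = ((-2:ℤ):ℝ) by norm_num, Real.rpow_intCast, Real.rpow_intCast]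
          norm_num
        calc 1/4 * (dist x o) ^ (-2:ℝ) = (2 * dist x o) ^ (-2:ℝ) := e1.symm
          _ ≤ (2 * dist x o) ^ (-a) :=
            Real.rpow_le_rpow_of_exponent_le h2d (by linarith)
          _ ≤ (1 + dist x o) ^ (-a) :=
            Real.rpow_le_rpow_of_nonpos (by linarith) (by linarith) (by linarith)
      have h2 : c₁ * ((dist x o) ^ (2-α) / (κ₂ * (α - 2))) ≤ G x o := by
        refine le_trans ?_ (hGreen_low x o hxo)
        refine mul_le_mul_of_nonneg_left ?_ hc₁.le
        exact (green_int_bounds μ κ₁ κ₂ α hκ₁ hκ₂ hα₂ o (hVol o) (hVol_fin o) hd1).1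
      refine ENNReal.ofReal_le_ofReal ?_
      have hdd : (dist x o) ^ (-2:ℝ) * (dist x o) ^ (2-α) = (dist x o) ^ (-α) := by
        rw [← Real.rpow_add hd0]; ring_nf
      calc k₁ * c₁ / (4 * (κ₂ * (α - 2))) * (dist x o) ^ (-α)
          = (k₁ * (1/4 * (dist x o) ^ (-2:ℝ))) *
              (c₁ * ((dist x o) ^ (2-α) / (κ₂ * (α - 2)))) := by
            rw [← hdd]; field_simp
        _ ≤ u x * G x o := mul_le_mul h1 h2
            (mul_nonneg hc₁.le (div_nonneg (Real.rpow_nonneg hd0.le _) (by positivity)))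
            (hu_nonneg x)
    have hdiv := diverge_lintegral μ κ₁ κ₂ α hκ₁ hκ₂ (by linarith) o (hVol o) (hVol_fin o)
      _ hC (fun x => ENNReal.ofReal (u x * G x o)) happ
    rw [hdiv] at hterm2
    exact absurd hterm2 (lt_irrefl _)
  · -- `2 < a` gives a uniform bound
    intro ha2
    have hα2 : (0:ℝ) < α - 2 := by linarith
    set β : ℝ := α + a - 2 with hβdef
    have hβ : α < β := by rw [hβdef]; linarith
    have hβ0 : (0:ℝ) < β := by rw [hβdef]; linarith
    set Cβ : ℝ≥0∞ := ENNReal.ofReal (κ₂ * 2 ^ α) * (1 - ENNReal.ofReal ((2:ℝ) ^ (α - β)))⁻¹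
      with hCβ
    have hCβtop : Cβ < ⊤ := by
      rw [hCβ]
      refine ENNReal.mul_lt_top ENNReal.ofReal_lt_top ?_
      rw [ENNReal.inv_lt_top]
      refine tsub_pos_of_lt ?_
      exact ENNReal.ofReal_lt_one.2 (Real.rpow_lt_one_of_one_lt_of_neg one_lt_two (by linarith))
    have htail : ∀ y : M, ∫⁻ x in (Metric.ball y 1)ᶜ,
        ENNReal.ofReal ((dist x y) ^ (-β)) ∂μ ≤ Cβ :=
      tail_lintegral_le μ κ₂ α β hκ₂ (by linarith) hβ (fun y R hR => (hVol y R hR).2) hVol_fin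
    have hball : ∀ y : M, μ (Metric.ball y 1) ≤ ENNReal.ofReal κ₂ := by
      intro y
      rw [ENNReal.le_ofReal_iff_toReal_le (hVol_fin y 1) hκ₂.le]
      have h := (hVol y 1 le_rfl).2
      rwa [Real.one_rpow, mul_one] at h
    have hm1 : Measurable fun x : M => ENNReal.ofReal ((1 + dist x o) ^ (-β)) := by
      have h : Continuous fun x : M => (1 + dist x o) ^ (-β) :=
        (continuous_const.add (continuous_id.dist continuous_const)).rpow_const
          fun x => Or.inl (ne_of_gt (lt_of_lt_of_le one_pos (le_add_of_nonneg_right dist_nonneg)))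
      exact h.measurable.ennreal_ofReal
    have hone : ∀ x : M, (1 + dist x o) ^ (-β) ≤ 1 := fun x =>
      Real.rpow_le_one_of_one_le_of_nonpos (le_add_of_nonneg_right dist_nonneg) (by linarith)
    have honea : ∀ x : M, (1 + dist x o) ^ (-a) ≤ 1 := fun x =>
      Real.rpow_le_one_of_one_le_of_nonpos (le_add_of_nonneg_right dist_nonneg) (by linarith)
    have hI₁ : ∫⁻ x, ENNReal.ofReal ((1 + dist x o) ^ (-β)) ∂μ ≤ ENNReal.ofReal κ₂ + Cβ := by
      rw [← lintegral_add_compl (fun x => ENNReal.ofReal ((1 + dist x o) ^ (-β)))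
        (measurableSet_ball : MeasurableSet (Metric.ball o 1))]
      refine add_le_add ?_ ?_
      · calc ∫⁻ x in Metric.ball o 1, ENNReal.ofReal ((1 + dist x o) ^ (-β)) ∂μ
            ≤ ∫⁻ _ in Metric.ball o 1, 1 ∂μ :=
              setLIntegral_mono' Metric.isOpen_ball.measurableSet fun x _ =>
                ENNReal.ofReal_le_one.2 (hone x)
          _ = μ (Metric.ball o 1) := by rw [setLIntegral_const, one_mul]
          _ ≤ ENNReal.ofReal κ₂ := hball o
      · refine le_trans (setLIntegral_mono' Metric.isOpen_ball.measurableSet.compl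
          fun x hx => ?_) (htail o)
        refine ENNReal.ofReal_le_ofReal ?_
        have hx1 : (1:ℝ) ≤ dist x o := by
          simpa [Metric.mem_ball, not_lt] using hx
        exact Real.rpow_le_rpow_of_nonpos (by linarith) (by linarith) (by linarith)
    have hCg : 0 < c₂ / (κ₁ * (α - 2)) := by positivity
    set Cg : ℝ := c₂ / (κ₁ * (α - 2)) with hCgdef
    set K : ℝ := k₂ * Cg * 2 ^ α with hK
    have h2α0 : (0:ℝ) < (2:ℝ) ^ α := Real.rpow_pos_of_pos (by norm_num) α
    have hK0 : 0 < K := by rw [hK]; positivity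
    have hpt : ∀ x₀ : M, ∀ x ∈ (Metric.ball x₀ 1)ᶜ,
        u x * G x x₀ ≤ K * ((1 + dist x o) ^ (-β) + (dist x x₀) ^ (-β)) := by
      intro x₀ x hx
      have hd1 : (1:ℝ) ≤ dist x x₀ := by
        simpa [Metric.mem_ball, not_lt] using hx
      have hd0 : (0:ℝ) < dist x x₀ := lt_of_lt_of_le one_pos hd1
      have hxo : x ≠ x₀ := fun h => by rw [h, dist_self] at hd1; linarith
      have hdono : (0:ℝ) ≤ dist x o := dist_nonneg
      have hdo0 : (0:ℝ) < 1 + dist x o := by linarith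
      have hG : G x x₀ ≤ Cg * (dist x x₀) ^ (2 - α) := by
        refine le_trans (hGreen_up x x₀ hxo) ?_
        have h := (green_int_bounds μ κ₁ κ₂ α hκ₁ hκ₂ hα₂ x₀ (hVol x₀) (hVol_fin x₀) hd1).2
        calc c₂ * (∫ t in Set.Ioi (dist x x₀), t / (μ (Metric.ball x₀ t)).toReal)
            ≤ c₂ * ((dist x x₀) ^ (2-α) / (κ₁ * (α-2))) := mul_le_mul_of_nonneg_left h hc₂.le
          _ = Cg * (dist x x₀) ^ (2 - α) := by rw [hCgdef]; ring
      have hXnn : (0:ℝ) ≤ (1 + dist x o) ^ (-β) := Real.rpow_nonneg hdo0.le _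
      have hYnn : (0:ℝ) ≤ (dist x x₀) ^ (-β) := Real.rpow_nonneg hd0.le _
      have hprod : u x * G x x₀ ≤
          (k₂ * (1 + dist x o) ^ (-a)) * (Cg * (dist x x₀) ^ (2 - α)) :=
        mul_le_mul (hu_up x) hG (hG_nonneg x x₀)
          (mul_nonneg hk₂.le (Real.rpow_nonneg hdo0.le _))
      refine hprod.trans ?_
      rcases le_or_gt ((1 + dist x o) / 2) (dist x x₀) with hcase | hcase
      · -- far from `x₀` relative to `o`
        have h1 : (dist x x₀) ^ (2-α) ≤ 2 ^ (α-2) * (1 + dist x o) ^ (2-α) := by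
          calc (dist x x₀) ^ (2-α) ≤ ((1 + dist x o) / 2) ^ (2-α) :=
              Real.rpow_le_rpow_of_nonpos (by positivity) hcase (by linarith)
            _ = 2 ^ (α-2) * (1 + dist x o) ^ (2-α) := by
              rw [Real.div_rpow hdo0.le (by norm_num), div_eq_mul_inv,
                ← Real.rpow_neg (by norm_num), show -(2-α) = α - 2 by ring]
              ring
        have hexp : -a + (2 - α) = -β := by rw [hβdef]; ring
        have h2pow : (2:ℝ) ^ (α-2) ≤ (2:ℝ) ^ α :=
          Real.rpow_le_rpow_of_exponent_le one_le_two (by linarith)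
        calc (k₂ * (1 + dist x o) ^ (-a)) * (Cg * (dist x x₀) ^ (2 - α))
            ≤ (k₂ * (1 + dist x o) ^ (-a)) * (Cg * (2 ^ (α-2) * (1 + dist x o) ^ (2-α))) := by
              refine mul_le_mul_of_nonneg_left (mul_le_mul_of_nonneg_left h1 hCg.le) ?_
              exact mul_nonneg hk₂.le (Real.rpow_nonneg hdo0.le _)
          _ = k₂ * Cg * 2 ^ (α-2) * ((1 + dist x o) ^ (-a) * (1 + dist x o) ^ (2-α)) := by
              ring
          _ = k₂ * Cg * 2 ^ (α-2) * (1 + dist x o) ^ (-β) := by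
              rw [← Real.rpow_add hdo0, hexp]
          _ ≤ K * ((1 + dist x o) ^ (-β) + (dist x x₀) ^ (-β)) := by
              rw [hK]
              have hkc : (0:ℝ) ≤ k₂ * Cg := mul_nonneg hk₂.le hCg.le
              nlinarith [mul_nonneg (mul_nonneg hkc h2α0.le) hYnn,
                mul_le_mul_of_nonneg_right (mul_le_mul_of_nonneg_left h2pow hkc) hXnn]
      · -- close to `x₀`
        have h1 : (1 + dist x o) ^ (-a) ≤ (dist x x₀) ^ (-a) := by
          calc (1 + dist x o) ^ (-a) ≤ (2 * dist x x₀) ^ (-a) :=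
              Real.rpow_le_rpow_of_nonpos (by linarith) (by linarith) (by linarith)
            _ = 2 ^ (-a) * (dist x x₀) ^ (-a) := Real.mul_rpow (by norm_num) hd0.le
            _ ≤ 1 * (dist x x₀) ^ (-a) := by
              refine mul_le_mul_of_nonneg_right ?_ (Real.rpow_nonneg hd0.le _)
              exact Real.rpow_le_one_of_one_le_of_nonpos one_le_two (by linarith)
            _ = (dist x x₀) ^ (-a) := one_mul _
        have hexp : -a + (2 - α) = -β := by rw [hβdef]; ring
        calc (k₂ * (1 + dist x o) ^ (-a)) * (Cg * (dist x x₀) ^ (2 - α))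
            ≤ (k₂ * (dist x x₀) ^ (-a)) * (Cg * (dist x x₀) ^ (2 - α)) := by
              refine mul_le_mul_of_nonneg_right (mul_le_mul_of_nonneg_left h1 hk₂.le) ?_
              exact mul_nonneg hCg.le (Real.rpow_nonneg hd0.le _)
          _ = k₂ * Cg * ((dist x x₀) ^ (-a) * (dist x x₀) ^ (2-α)) := by ring
          _ = k₂ * Cg * (dist x x₀) ^ (-β) := by rw [← Real.rpow_add hd0, hexp]
          _ ≤ K * ((1 + dist x o) ^ (-β) + (dist x x₀) ^ (-β)) := by
              rw [hK]
              have hkc : (0:ℝ) ≤ k₂ * Cg := mul_nonneg hk₂.le hCg.le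
              have h2α1 : (1:ℝ) ≤ (2:ℝ) ^ α :=
                Real.one_le_rpow one_le_two (by linarith)
              nlinarith [mul_nonneg (mul_nonneg hkc h2α0.le) hXnn,
                mul_le_mul_of_nonneg_right
                  (mul_le_mul_of_nonneg_left h2α1 hkc) hYnn]
    have hbound : ∀ x₀ : M,
        (∫⁻ x in Metric.ball x₀ 1, ENNReal.ofReal (u x) ∂μ) +
          (∫⁻ x in (Metric.ball x₀ 1)ᶜ, ENNReal.ofReal (u x * G x x₀) ∂μ) ≤
        ENNReal.ofReal k₂ * ENNReal.ofReal κ₂ +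
          ENNReal.ofReal K * ((ENNReal.ofReal κ₂ + Cβ) + Cβ) := by
      intro x₀
      refine add_le_add ?_ ?_
      · calc ∫⁻ x in Metric.ball x₀ 1, ENNReal.ofReal (u x) ∂μ
            ≤ ∫⁻ _ in Metric.ball x₀ 1, ENNReal.ofReal k₂ ∂μ := by
              refine setLIntegral_mono' Metric.isOpen_ball.measurableSet fun x _ => ?_
              refine ENNReal.ofReal_le_ofReal ((hu_up x).trans ?_)
              have := honea x
              nlinarith
          _ = ENNReal.ofReal k₂ * μ (Metric.ball x₀ 1) := setLIntegral_const _ _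
          _ ≤ ENNReal.ofReal k₂ * ENNReal.ofReal κ₂ := mul_le_mul_right (hball x₀) _
      · calc ∫⁻ x in (Metric.ball x₀ 1)ᶜ, ENNReal.ofReal (u x * G x x₀) ∂μ
            ≤ ∫⁻ x in (Metric.ball x₀ 1)ᶜ,
                ENNReal.ofReal K * (ENNReal.ofReal ((1 + dist x o) ^ (-β)) +
                  ENNReal.ofReal ((dist x x₀) ^ (-β))) ∂μ := by
              refine setLIntegral_mono' Metric.isOpen_ball.measurableSet.compl fun x hx => ?_
              rw [← ENNReal.ofReal_add (Real.rpow_nonneg (by positivity) _)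
                (Real.rpow_nonneg dist_nonneg _), ← ENNReal.ofReal_mul hK0.le]
              exact ENNReal.ofReal_le_ofReal (hpt x₀ x hx)
          _ = ENNReal.ofReal K * ∫⁻ x in (Metric.ball x₀ 1)ᶜ,
                (ENNReal.ofReal ((1 + dist x o) ^ (-β)) +
                  ENNReal.ofReal ((dist x x₀) ^ (-β))) ∂μ :=
              lintegral_const_mul' _ _ ENNReal.ofReal_ne_top
          _ ≤ ENNReal.ofReal K * ((ENNReal.ofReal κ₂ + Cβ) + Cβ) := by
              refine mul_le_mul_right ?_ _
              rw [lintegral_add_left hm1]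
              exact add_le_add (le_trans (setLIntegral_le_lintegral _ _) hI₁) (htail x₀)
    refine lt_of_le_of_lt (iSup_le hbound) ?_
    refine ENNReal.add_lt_top.2 ⟨?_, ?_⟩
    · exact ENNReal.mul_lt_top ENNReal.ofReal_lt_top ENNReal.ofReal_lt_top
    · refine ENNReal.mul_lt_top ENNReal.ofReal_lt_top ?_
      exact ENNReal.add_lt_top.2 ⟨ENNReal.add_lt_top.2 ⟨ENNReal.ofReal_lt_top, hCβtop⟩, hCβtop⟩
end

section
/- Let m > 1, n ≥ 3 and suppose for a.e. x₀ and all t₀ > 0: u(x₀,t₀)^m ≤ (C/t₀)∫_M u(x,t₀)G(x,x₀)dμ(x), together with the short-range bound ∫_{B_R(x₀)} G(·,x₀)dμ ≤ C R² for 0 < R ≤ 1, the tail bound ∫_{M∖B_R(x₀)} u(·,t₀)G(·,x₀)dμ ≤ C R^{−(n−2)}‖u₀‖_{L¹} for 0 < R ≤ 1, and ‖u(t)‖_{L¹} ≤ ‖u₀‖_{L¹}. Then there exist C', K > 0 such that ‖u(t)‖_{L^∞} ≤ C' t^{−n/((m−1)n+2)} ‖u₀‖_{L¹}^{2/(n(m−1)+2)}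 for all 0 < t ≤ K‖u₀‖_{L¹}^{−(m−1)} (the Euclidean-type short-time smoothing estimate), obtained by optimizing R = const · t^{1/(n(m−1)+2)}‖u₀‖_{L¹}^{(m−1)/(n(m−1)+2)} ≤ 1. -/
open MeasureTheory Set

lemma aux_split {m a b Nf : ℝ} (hm : 1 < m) (ha : 0 < a) (hb : 0 < b) (hN : 0 ≤ Nf)
    (h : Nf ^ m ≤ a * Nf + b) :
    Nf ≤ (2*a) ^ (1/(m-1)) + (2*b) ^ (1/m) := by
  have hm0 : (0:ℝ) < m := lt_trans one_pos hm
  have hm1 : (0:ℝ) < m - 1 := sub_pos.mpr hm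
  rcases le_total (a * Nf) b with hab | hab
  · have h2 : Nf ^ m ≤ 2 * b := by linarith
    calc Nf = (Nf^m)^(1/m) := by
          rw [← Real.rpow_mul hN, mul_one_div_cancel (ne_of_gt hm0), Real.rpow_one]
      _ ≤ (2*b)^(1/m) := Real.rpow_le_rpow (Real.rpow_nonneg hN m) h2 (by positivity)
      _ ≤ _ := le_add_of_nonneg_left (Real.rpow_nonneg (by positivity) _)
  · rcases eq_or_lt_of_le hN with h0 | h0
    · rw [← h0]; positivity
    · have h3 : Nf ^ (m - 1) ≤ 2 * a := by
        rw [Real.rpow_sub h0, Real.rpow_one, div_le_iff₀ h0]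
        linarith
      calc Nf = (Nf^(m-1))^(1/(m-1)) := by
            rw [← Real.rpow_mul hN, mul_one_div_cancel (ne_of_gt hm1), Real.rpow_one]
        _ ≤ (2*a)^(1/(m-1)) := Real.rpow_le_rpow (Real.rpow_nonneg hN _) h3 (by positivity)
        _ ≤ _ := le_add_of_nonneg_right (Real.rpow_nonneg (by positivity) _)

lemma rpow_prod3 {A t N : ℝ} (hA : 0 < A) (ht : 0 < t) (hN : 0 < N) (p q s : ℝ) :
    (A * t ^ p * N ^ q) ^ s = A ^ s * t ^ (p * s) * N ^ (q * s) := by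
  rw [Real.mul_rpow (by positivity) (Real.rpow_nonneg hN.le _),
      Real.mul_rpow hA.le (Real.rpow_nonneg ht.le _),
      ← Real.rpow_mul ht.le, ← Real.rpow_mul hN.le]

/-- abstract short-time smoothing: from the fundamental pointwise
inequality, the short-range bound `∫_{B_R(x₀)}G ≤ C R²` for `0 < R ≤ 1`, the tail bound
`∫_{M∖B_R(x₀)} u(·,t₀)G(·,x₀) dμ ≤ C R^{−(n−2)}‖u₀‖₁` for `0 < R ≤ 1`, and mass
nonexpansivity, one obtains `C', K > 0` with
`‖u(t)‖_∞ ≤ C' t^{−n/((m−1)n+2)} ‖u₀‖₁^{2/(n(m−1)+2)}` for `0 < t ≤ K ‖u₀‖₁^{−(m−1)}`. -/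
theorem stmt_17 {M : Type*} [MetricSpace M] [MeasurableSpace M] [BorelSpace M]
    (μ : MeasureTheory.Measure M) (G : M → M → ℝ) (u : M → ℝ → ℝ)
    (Ninf : ℝ → ℝ) (n : ℕ) (m C N₀ : ℝ)
    (hn : 3 ≤ n) (hm : 1 < m) (hC : 0 < C) (hN₀ : 0 < N₀)
    (hu_nonneg : ∀ x t, 0 ≤ u x t)
    (hG_nonneg : ∀ x x₀, 0 ≤ G x x₀)
    (hNinf_nonneg : ∀ t, 0 ≤ Ninf t)
    (hNinf_bound : ∀ t, 0 < t → ∀ᵐ x ∂μ, u x t ≤ Ninf t)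
    (hNinf_least : ∀ t K, 0 < t → (∀ᵐ x ∂μ, u x t ≤ K) → Ninf t ≤ K)
    (hint : ∀ (t : ℝ) (x₀ : M), 0 < t → MeasureTheory.Integrable (fun x => u x t * G x x₀) μ)
    (hGint : ∀ (x₀ : M) (R : ℝ), 0 < R → R ≤ 1 →
      MeasureTheory.IntegrableOn (fun x => G x x₀) (Metric.ball x₀ R) μ)
    -- (a) fundamental pointwise estimate:
    (ha : ∀ t₀ : ℝ, 0 < t₀ → ∀ᵐ x₀ ∂μ,
      u x₀ t₀ ^ m ≤ C / t₀ * ∫ x, u x t₀ * G x x₀ ∂μ)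
    -- (b) short-range Green bound:
    (hb : ∀ (x₀ : M) (R : ℝ), 0 < R → R ≤ 1 →
      (∫ x in Metric.ball x₀ R, G x x₀ ∂μ) ≤ C * R ^ 2)
    -- (c) tail bound:
    (hc' : ∀ (t₀ : ℝ) (x₀ : M) (R : ℝ), 0 < t₀ → 0 < R → R ≤ 1 →
      (∫ x in (Metric.ball x₀ R)ᶜ, u x t₀ * G x x₀ ∂μ) ≤ C * R ^ (-((n : ℝ) - 2)) * N₀)
    -- (d) mass nonexpansivity:
    (hd : ∀ t : ℝ, 0 < t → (∫ x, u x t ∂μ) ≤ N₀) :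
    ∃ C' > (0 : ℝ), ∃ K > (0 : ℝ), ∀ t : ℝ, 0 < t → t ≤ K * N₀ ^ (-(m - 1)) →
      Ninf t ≤ C' * t ^ (-((n : ℝ) / ((m - 1) * n + 2))) *
        N₀ ^ (2 / ((n : ℝ) * (m - 1) + 2)) := by
  have hm0 : (0:ℝ) < m := lt_trans one_pos hm
  have hm0' : m ≠ 0 := ne_of_gt hm0
  have hm1 : (0:ℝ) < m - 1 := sub_pos.mpr hm
  have hm1' : m - 1 ≠ 0 := ne_of_gt hm1
  have hn3 : (3:ℝ) ≤ (n:ℝ) := by exact_mod_cast hn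
  set θ : ℝ := (n:ℝ) * (m - 1) + 2 with hθdef
  have hθ : 0 < θ := by
    have : 0 < (n:ℝ) * (m - 1) := mul_pos (by linarith) hm1
    simp only [hθdef]; linarith
  have hθ' : θ ≠ 0 := ne_of_gt hθ
  -- key inequality for any admissible R
  have key : ∀ t : ℝ, 0 < t → ∀ R : ℝ, 0 < R → R ≤ 1 →
      Ninf t ^ m ≤ (C/t*(C*R^2)) * Ninf t + C/t*(C*R^(-((n:ℝ)-2))*N₀) := by
    intro t ht R hR hR1
    have hIb : ∀ x₀ : M, (∫ x, u x t * G x x₀ ∂μ)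
        ≤ Ninf t * (C*R^2) + C*R^(-((n:ℝ)-2))*N₀ := by
      intro x₀
      have hsplit : (∫ x, u x t * G x x₀ ∂μ)
          = (∫ x in Metric.ball x₀ R, u x t * G x x₀ ∂μ)
            + ∫ x in (Metric.ball x₀ R)ᶜ, u x t * G x x₀ ∂μ :=
        (integral_add_compl measurableSet_ball (hint t x₀ ht)).symm
      have h1 : (∫ x in Metric.ball x₀ R, u x t * G x x₀ ∂μ) ≤ Ninf t * (C*R^2) := by
        have hle : (∫ x in Metric.ball x₀ R, u x t * G x x₀ ∂μ)
            ≤ ∫ x in Metric.ball x₀ R, Ninf t * G x x₀ ∂μ := by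
          apply integral_mono_ae ((hint t x₀ ht).integrableOn)
            ((hGint x₀ R hR hR1).const_mul _)
          filter_upwards [ae_restrict_of_ae (hNinf_bound t ht)] with x hx
          exact mul_le_mul_of_nonneg_right hx (hG_nonneg x x₀)
        calc (∫ x in Metric.ball x₀ R, u x t * G x x₀ ∂μ)
            ≤ ∫ x in Metric.ball x₀ R, Ninf t * G x x₀ ∂μ := hle
          _ = Ninf t * ∫ x in Metric.ball x₀ R, G x x₀ ∂μ := integral_const_mul _ _
          _ ≤ Ninf t * (C*R^2) :=
              mul_le_mul_of_nonneg_left (hb x₀ R hR hR1) (hNinf_nonneg t)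
      calc (∫ x, u x t * G x x₀ ∂μ)
          = _ + _ := hsplit
        _ ≤ Ninf t * (C*R^2) + C*R^(-((n:ℝ)-2))*N₀ :=
            add_le_add h1 (by
              have := hc' t x₀ R ht hR hR1
              linarith)
    have hA_nonneg : 0 ≤ C/t * (Ninf t * (C*R^2) + C*R^(-((n:ℝ)-2))*N₀) := by
      have h1 : 0 ≤ Ninf t * (C*R^2) := mul_nonneg (hNinf_nonneg t) (by positivity)
      have h2 : (0:ℝ) ≤ C*R^(-((n:ℝ)-2))*N₀ := by positivity
      have h3 : (0:ℝ) ≤ C/t := by positivity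
      exact mul_nonneg h3 (by linarith)
    have hae : ∀ᵐ x₀ ∂μ, u x₀ t
        ≤ (C/t * (Ninf t * (C*R^2) + C*R^(-((n:ℝ)-2))*N₀)) ^ (1/m) := by
      filter_upwards [ha t ht] with x₀ hx₀
      have hA : u x₀ t ^ m ≤ C/t * (Ninf t * (C*R^2) + C*R^(-((n:ℝ)-2))*N₀) :=
        hx₀.trans (mul_le_mul_of_nonneg_left (hIb x₀) (by positivity))
      have h4 := Real.rpow_le_rpow (Real.rpow_nonneg (hu_nonneg x₀ t) m) hA
        (le_of_lt (by positivity : (0:ℝ) < 1/m))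
      rwa [← Real.rpow_mul (hu_nonneg x₀ t), mul_one_div_cancel hm0', Real.rpow_one] at h4
    have hNle := hNinf_least t _ ht hae
    have h5 := Real.rpow_le_rpow (hNinf_nonneg t) hNle hm0.le
    rw [← Real.rpow_mul hA_nonneg, one_div_mul_cancel hm0', Real.rpow_one] at h5
    calc Ninf t ^ m ≤ C/t * (Ninf t * (C*R^2) + C*R^(-((n:ℝ)-2))*N₀) := h5
      _ = (C/t*(C*R^2)) * Ninf t + C/t*(C*R^(-((n:ℝ)-2))*N₀) := by ring
  -- choose constants
  refine ⟨(2*C^2) ^ (1/(m-1)) + (2*C^2) ^ (1/m), by positivity, 1, one_pos, ?_⟩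
  intro t ht htK
  -- the optimized radius
  set base : ℝ := t * N₀ ^ (m-1) with hbasedef
  have hbasepos : 0 < base := mul_pos ht (Real.rpow_pos_of_pos hN₀ _)
  have hbase1 : base ≤ 1 := by
    have h1 : t ≤ (N₀ ^ (m-1))⁻¹ := by
      rw [one_mul, Real.rpow_neg hN₀.le] at htK; exact htK
    calc base ≤ (N₀ ^ (m-1))⁻¹ * N₀ ^ (m-1) :=
          mul_le_mul_of_nonneg_right h1 (Real.rpow_nonneg hN₀.le _)
      _ = 1 := inv_mul_cancel₀ (ne_of_gt (Real.rpow_pos_of_pos hN₀ _))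
  set R : ℝ := base ^ (1/θ) with hRdef
  have hRpos : 0 < R := Real.rpow_pos_of_pos hbasepos _
  have hR1 : R ≤ 1 := Real.rpow_le_one hbasepos.le hbase1 (by positivity)
  have hkey := key t ht R hRpos hR1
  set a : ℝ := C/t*(C*R^2) with hadef
  set b : ℝ := C/t*(C*R^(-((n:ℝ)-2))*N₀) with hbdef
  have hapos : 0 < a := by
    have : (0:ℝ) < R^2 := by positivity
    rw [hadef]; positivity
  have hbpos : 0 < b := by
    have : (0:ℝ) < R^(-((n:ℝ)-2)) := Real.rpow_pos_of_pos hRpos _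
    rw [hbdef]; positivity
  have hsplit := aux_split hm hapos hbpos (hNinf_nonneg t) hkey
  -- compute the two terms
  have hR2 : R^2 = t ^ (2/θ) * N₀ ^ ((m-1)*(2/θ)) := by
    have h1 : R ^ 2 = base ^ ((2:ℝ)/θ) := by
      rw [hRdef, ← Real.rpow_natCast (base ^ (1/θ)) 2, ← Real.rpow_mul hbasepos.le]
      congr 1
      push_cast
      ring
    rw [h1, hbasedef, Real.mul_rpow ht.le (Real.rpow_nonneg hN₀.le _),
        ← Real.rpow_mul hN₀.le]
  have hRn : R^(-((n:ℝ)-2)) = t ^ (-((n:ℝ)-2)/θ) * N₀ ^ ((m-1)*(-((n:ℝ)-2)/θ)) := by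
    have h1 : R ^ (-((n:ℝ)-2)) = base ^ (-((n:ℝ)-2)/θ) := by
      rw [hRdef, ← Real.rpow_mul hbasepos.le]
      ring_nf
    rw [h1, hbasedef, Real.mul_rpow ht.le (Real.rpow_nonneg hN₀.le _),
        ← Real.rpow_mul hN₀.le]
  have h2a : 2*a = (2*C^2) * t ^ (2/θ - 1) * N₀ ^ ((m-1)*(2/θ)) := by
    rw [hadef, hR2, Real.rpow_sub ht, Real.rpow_one]
    field_simp
  have h2b : 2*b = (2*C^2) * t ^ (-((n:ℝ)-2)/θ - 1) * N₀ ^ ((m-1)*(-((n:ℝ)-2)/θ) + 1) := by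
    rw [hbdef, hRn, Real.rpow_sub ht, Real.rpow_one, Real.rpow_add hN₀, Real.rpow_one]
    field_simp
  have e1 : (2/θ - 1) * (1/(m-1)) = -((n:ℝ) / ((m - 1) * n + 2)) := by
    rw [hθdef]; field_simp; ring
  have e2 : ((m-1)*(2/θ)) * (1/(m-1)) = 2 / ((n:ℝ) * (m - 1) + 2) := by
    rw [hθdef]; field_simp
  have e3 : (-((n:ℝ)-2)/θ - 1) * (1/m) = -((n:ℝ) / ((m - 1) * n + 2)) := by
    rw [hθdef]; field_simp; ring
  have e4 : ((m-1)*(-((n:ℝ)-2)/θ) + 1) * (1/m) = 2 / ((n:ℝ) * (m - 1) + 2) := by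
    rw [hθdef]; field_simp; ring
  have hT1 : (2*a) ^ (1/(m-1))
      = (2*C^2) ^ (1/(m-1)) * t ^ (-((n:ℝ) / ((m - 1) * n + 2)))
        * N₀ ^ (2 / ((n:ℝ) * (m - 1) + 2)) := by
    rw [h2a, rpow_prod3 (by positivity) ht hN₀, e1, e2]
  have hT2 : (2*b) ^ (1/m)
      = (2*C^2) ^ (1/m) * t ^ (-((n:ℝ) / ((m - 1) * n + 2)))
        * N₀ ^ (2 / ((n:ℝ) * (m - 1) + 2)) := by
    rw [h2b, rpow_prod3 (by positivity) ht hN₀, e3, e4]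
  calc Ninf t ≤ (2*a) ^ (1/(m-1)) + (2*b) ^ (1/m) := hsplit
    _ = ((2*C^2) ^ (1/(m-1)) + (2*C^2) ^ (1/m)) * t ^ (-((n:ℝ) / ((m - 1) * n + 2)))
        * N₀ ^ (2 / ((n:ℝ) * (m - 1) + 2)) := by rw [hT1, hT2]; ring
end

section
/- Let m > 1 and suppose that for a.e. x₀ and all t₀ > 0: u(x₀,t₀)^m ≤ (C/t₀)∫_M u(x,t₀)G(x,x₀)dμ(x), that ∫_{B_{R₀}(x₀)}G(·,x₀)dμ ≤ C, that ∫_{M∖B_{R₀}(x₀)} u(·,t₀)G(·,x₀)dμ ≤ ‖u(t₀)‖_{L¹_{x₀,G}}, and the L¹_G-stability ‖u(t)‖_{L¹_{x₀,G}} ≤ C‖u₀‖_{L¹_{x₀,G}}. Then Young's inequality gives ‖u(t)‖_{L^∞} ≤ C'(t^{−m/(m−1)} + t^{−1}‖u₀‖_{L¹_G})^{1/m}, and consequently ‖u(t)‖_{L^∞} ≤ C'' t^{−1/m} ‖u₀‖_{L¹_G}^{1/m} for every t ≥ ‖u₀‖_{L¹_G}^{−(m−1)}. -/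
open MeasureTheory Set

/-- abstract `L¹_G` smoothing: from the fundamental pointwise inequality,
`∫_{B_{R₀}(x₀)}G ≤ C`, the tail bound by the weighted norm
`∫_{M∖B_{R₀}(x₀)} u(·,t₀)G(·,x₀)dμ ≤ ‖u(t₀)‖_{L¹_{x₀,G}}`, and the stability
`‖u(t)‖_{L¹_{x₀,G}} ≤ C‖u₀‖_{L¹_G}`, Young's inequality gives
`‖u(t)‖_∞ ≤ C'(t^{−m/(m−1)} + ‖u₀‖_{L¹_G}/t)^{1/m}`, and consequently
`‖u(t)‖_∞ ≤ C'' t^{−1/m}‖u₀‖_{L¹_G}^{1/m}` for every `t ≥ ‖u₀‖_{L¹_G}^{−(m−1)}`. -/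
theorem stmt_18 {M : Type*} [MetricSpace M] [MeasurableSpace M] [BorelSpace M]
    (μ : MeasureTheory.Measure M) (G : M → M → ℝ) (u : M → ℝ → ℝ)
    (NG : ℝ → M → ℝ) (Ninf : ℝ → ℝ) (m C R₀ N₀ : ℝ)
    (hm : 1 < m) (hC : 0 < C) (hR₀ : 1 ≤ R₀) (hN₀ : 0 < N₀)
    (hu_nonneg : ∀ x t, 0 ≤ u x t)
    (hG_nonneg : ∀ x x₀, 0 ≤ G x x₀)
    (hNinf_nonneg : ∀ t, 0 ≤ Ninf t)
    (hNinf_bound : ∀ t, 0 < t → ∀ᵐ x ∂μ, u x t ≤ Ninf t)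
    (hNinf_least : ∀ t K, 0 < t → (∀ᵐ x ∂μ, u x t ≤ K) → Ninf t ≤ K)
    (hint : ∀ (t : ℝ) (x₀ : M), 0 < t → MeasureTheory.Integrable (fun x => u x t * G x x₀) μ)
    (hGint : ∀ x₀ : M,
      MeasureTheory.IntegrableOn (fun x => G x x₀) (Metric.ball x₀ R₀) μ)
    -- (a) fundamental pointwise estimate:
    (ha : ∀ t₀ : ℝ, 0 < t₀ → ∀ᵐ x₀ ∂μ,
      u x₀ t₀ ^ m ≤ C / t₀ * ∫ x, u x t₀ * G x x₀ ∂μ)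
    -- (b) Green bound on `B_{R₀}`:
    (hb : ∀ x₀ : M, (∫ x in Metric.ball x₀ R₀, G x x₀ ∂μ) ≤ C)
    -- (c) tail bound by the weighted norm:
    (hc' : ∀ (t₀ : ℝ) (x₀ : M), 0 < t₀ →
      (∫ x in (Metric.ball x₀ R₀)ᶜ, u x t₀ * G x x₀ ∂μ) ≤ NG t₀ x₀)
    -- (d) `L¹_G` stability:
    (hd : ∀ (t : ℝ) (x₀ : M), 0 < t → NG t x₀ ≤ C * N₀) :
    (∃ C' > (0 : ℝ), ∀ t : ℝ, 0 < t →
      Ninf t ≤ C' * (t ^ (-(m / (m - 1))) + N₀ / t) ^ (1 / m)) ∧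
    ∃ C'' > (0 : ℝ), ∀ t : ℝ, N₀ ^ (-(m - 1)) ≤ t →
      Ninf t ≤ C'' * t ^ (-(1 / m)) * N₀ ^ (1 / m) := by
  have hm0 : (0:ℝ) < m := lt_trans one_pos hm
  have hm1 : (0:ℝ) < m - 1 := by linarith
  set q : ℝ := m / (m - 1) with hqdef
  have hpq : m.HolderConjugate q := (Real.holderConjugate_iff_eq_conjExponent hm).2 hqdef
  have hq1 : 1 < q := hpq.symm.lt
  have hq0 : 0 < q := lt_trans one_pos hq1
  -- Key iterated estimate: Ninf t ^ m ≤ C²/t · Ninf t + C² N₀ / t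
  have key : ∀ t : ℝ, 0 < t →
      Ninf t ^ m ≤ C ^ 2 / t * Ninf t + C ^ 2 * N₀ / t := by
    intro t ht
    set X : ℝ := C / t * (Ninf t * C + C * N₀) with hXdef
    have hX : (0:ℝ) ≤ X := by
      have := hNinf_nonneg t
      positivity
    have hK : ∀ᵐ x₀ ∂μ, u x₀ t ≤ X ^ (1/m) := by
      filter_upwards [ha t ht] with x₀ hx₀
      -- bound the integral over the ball
      have h1 : ∀ᵐ x ∂(μ.restrict (Metric.ball x₀ R₀)),
          u x t * G x x₀ ≤ Ninf t * G x x₀ := by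
        filter_upwards [ae_restrict_of_ae (hNinf_bound t ht)] with x hx
        exact mul_le_mul_of_nonneg_right hx (hG_nonneg x x₀)
      have hball : (∫ x in Metric.ball x₀ R₀, u x t * G x x₀ ∂μ) ≤ Ninf t * C := by
        have h2 : (∫ x in Metric.ball x₀ R₀, u x t * G x x₀ ∂μ)
            ≤ ∫ x in Metric.ball x₀ R₀, Ninf t * G x x₀ ∂μ :=
          integral_mono_ae ((hint t x₀ ht).restrict)
            ((hGint x₀).const_mul (Ninf t)) h1
        rw [integral_const_mul] at h2
        exact h2.trans (mul_le_mul_of_nonneg_left (hb x₀) (hNinf_nonneg t))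
      have htail : (∫ x in (Metric.ball x₀ R₀)ᶜ, u x t * G x x₀ ∂μ) ≤ C * N₀ :=
        (hc' t x₀ ht).trans (hd t x₀ ht)
      have hsplit : (∫ x, u x t * G x x₀ ∂μ)
          = (∫ x in Metric.ball x₀ R₀, u x t * G x x₀ ∂μ)
            + ∫ x in (Metric.ball x₀ R₀)ᶜ, u x t * G x x₀ ∂μ :=
        (integral_add_compl Metric.isOpen_ball.measurableSet (hint t x₀ ht)).symm
      have hint_le : (∫ x, u x t * G x x₀ ∂μ) ≤ Ninf t * C + C * N₀ := by
        rw [hsplit]; exact add_le_add hball htail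
      have hxm : u x₀ t ^ m ≤ X := by
        refine hx₀.trans ?_
        rw [hXdef]
        exact mul_le_mul_of_nonneg_left hint_le (by positivity)
      calc u x₀ t = (u x₀ t ^ m) ^ (1/m) := by
            rw [← Real.rpow_mul (hu_nonneg x₀ t), mul_one_div, div_self hm0.ne',
              Real.rpow_one]
        _ ≤ X ^ (1/m) :=
            Real.rpow_le_rpow (Real.rpow_nonneg (hu_nonneg x₀ t) m) hxm (by positivity)
    have hNle : Ninf t ≤ X ^ (1/m) := hNinf_least t _ ht hK
    have h3 : Ninf t ^ m ≤ X := by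
      have h4 := Real.rpow_le_rpow (hNinf_nonneg t) hNle hm0.le
      rwa [← Real.rpow_mul hX, one_div, inv_mul_cancel₀ hm0.ne', Real.rpow_one] at h4
    calc Ninf t ^ m ≤ X := h3
      _ = C ^ 2 / t * Ninf t + C ^ 2 * N₀ / t := by rw [hXdef]; ring
  -- From Young's inequality: Ninf t ^ m ≤ A * (t^(-q) + N₀/t)
  obtain ⟨A, hAdef⟩ : ∃ A : ℝ, A = m / (m - 1) * ((C ^ 2) ^ q + C ^ 2) := ⟨_, rfl⟩
  have hA : 0 < A := by
    rw [hAdef]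
    have h1 : (0:ℝ) < (C ^ 2) ^ q + C ^ 2 := by positivity
    exact mul_pos (div_pos hm0 hm1) h1
  have key2 : ∀ t : ℝ, 0 < t → Ninf t ^ m ≤ A * (t ^ (-q) + N₀ / t) := by
    intro t ht
    have hs : (0:ℝ) ≤ t ^ (-q) := Real.rpow_nonneg ht.le _
    have hr : (0:ℝ) ≤ N₀ / t := by positivity
    have hyoung : Ninf t * (C ^ 2 / t) ≤ Ninf t ^ m / m + (C ^ 2 / t) ^ q / q :=
      Real.young_inequality_of_nonneg (hNinf_nonneg t) (by positivity) hpq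
    have hCq : (C ^ 2 / t) ^ q = (C ^ 2) ^ q * t ^ (-q) := by
      rw [Real.div_rpow (by positivity) ht.le, Real.rpow_neg ht.le, div_eq_mul_inv]
    have hBs : (C ^ 2) ^ q * t ^ (-q) / q ≤ (C ^ 2) ^ q * t ^ (-q) :=
      div_le_self (by positivity) hq1.le
    have h5 : Ninf t ^ m * ((m - 1) / m) ≤ (C ^ 2) ^ q * t ^ (-q) + C ^ 2 * (N₀ / t) := by
      have hkey := key t ht
      have hid : Ninf t ^ m * ((m - 1) / m) = Ninf t ^ m - Ninf t ^ m / m := by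
        field_simp
      rw [hCq] at hyoung
      have : C ^ 2 / t * Ninf t = Ninf t * (C ^ 2 / t) := by ring
      rw [this] at hkey
      rw [hid]
      have h7 : C ^ 2 * N₀ / t = C ^ 2 * (N₀ / t) := by ring
      linarith [hyoung, hBs]
    have h8 : Ninf t ^ m ≤ ((C ^ 2) ^ q * t ^ (-q) + C ^ 2 * (N₀ / t)) / ((m - 1) / m) := by
      rw [le_div_iff₀ (by positivity)]
      exact h5
    refine h8.trans ?_
    rw [div_div_eq_mul_div, div_le_iff₀ hm1]
    have hterm : (C ^ 2) ^ q * t ^ (-q) + C ^ 2 * (N₀ / t)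
        ≤ ((C ^ 2) ^ q + C ^ 2) * (t ^ (-q) + N₀ / t) := by
      have hc2 : (0:ℝ) ≤ C ^ 2 := by positivity
      have hcq : (0:ℝ) ≤ (C ^ 2) ^ q := Real.rpow_nonneg hc2 q
      nlinarith
    calc ((C ^ 2) ^ q * t ^ (-q) + C ^ 2 * (N₀ / t)) * m
        ≤ (((C ^ 2) ^ q + C ^ 2) * (t ^ (-q) + N₀ / t)) * m :=
          mul_le_mul_of_nonneg_right hterm hm0.le
      _ = A * (t ^ (-q) + N₀ / t) * (m - 1) := by rw [hAdef]; field_simp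
  -- Part 1
  have part1 : ∀ t : ℝ, 0 < t →
      Ninf t ≤ A ^ (1/m) * (t ^ (-q) + N₀ / t) ^ (1/m) := by
    intro t ht
    have hsum : (0:ℝ) ≤ t ^ (-q) + N₀ / t := by
      have := Real.rpow_nonneg ht.le (-q); positivity
    have h9 : Ninf t ≤ (A * (t ^ (-q) + N₀ / t)) ^ (1/m) := by
      calc Ninf t = (Ninf t ^ m) ^ (1/m) := by
            rw [← Real.rpow_mul (hNinf_nonneg t), mul_one_div, div_self hm0.ne',
              Real.rpow_one]
        _ ≤ (A * (t ^ (-q) + N₀ / t)) ^ (1/m) :=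
            Real.rpow_le_rpow (Real.rpow_nonneg (hNinf_nonneg t) m) (key2 t ht)
              (by positivity)
    rwa [Real.mul_rpow hA.le hsum] at h9
  have hC'pos : 0 < A ^ (1/m) := Real.rpow_pos_of_pos hA _
  refine ⟨⟨A ^ (1/m), hC'pos, part1⟩, ?_⟩
  -- Part 2
  refine ⟨A ^ (1/m) * 2 ^ (1/m), by positivity, ?_⟩
  intro t htge
  have ht : 0 < t := lt_of_lt_of_le (Real.rpow_pos_of_pos hN₀ _) htge
  have hmono : t ^ (-(1 / (m - 1))) ≤ N₀ := by
    have h10 : t ^ (-(1 / (m - 1))) ≤ (N₀ ^ (-(m - 1))) ^ (-(1 / (m - 1))) :=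
      Real.rpow_le_rpow_of_nonpos (Real.rpow_pos_of_pos hN₀ _) htge
        (by rw [neg_nonpos]; positivity)
    have h11 : (N₀ ^ (-(m - 1))) ^ (-(1 / (m - 1))) = N₀ := by
      rw [← Real.rpow_mul hN₀.le]
      rw [show -(m - 1) * -(1 / (m - 1)) = 1 by field_simp]
      exact Real.rpow_one N₀
    rwa [h11] at h10
  have hts : t ^ (-q) ≤ N₀ / t := by
    have heq : t ^ (-q) = t⁻¹ * t ^ (-(1 / (m - 1))) := by
      rw [← Real.rpow_neg_one t, ← Real.rpow_add ht]
      congr 1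
      rw [hqdef]
      field_simp
      ring
    have hnt : N₀ / t = t⁻¹ * N₀ := by ring
    rw [heq, hnt]
    exact mul_le_mul_of_nonneg_left hmono (by positivity)
  have hbound : t ^ (-q) + N₀ / t ≤ 2 * (N₀ / t) := by linarith
  have h12 : Ninf t ≤ A ^ (1/m) * (2 * (N₀ / t)) ^ (1/m) := by
    refine (part1 t ht).trans ?_
    refine mul_le_mul_of_nonneg_left ?_ hC'pos.le
    refine Real.rpow_le_rpow ?_ hbound (by positivity)
    have := Real.rpow_nonneg ht.le (-q); positivity
  calc Ninf t ≤ A ^ (1/m) * (2 * (N₀ / t)) ^ (1/m) := h12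
    _ = A ^ (1/m) * 2 ^ (1/m) * t ^ (-(1/m)) * N₀ ^ (1/m) := by
        rw [Real.mul_rpow (by norm_num) (by positivity),
          Real.div_rpow hN₀.le ht.le, Real.rpow_neg ht.le]
        ring
end
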